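/- arXiv:2401.17090 — 7 statements merged into one kernel-verified Lean document; each statement's English description precedes it below -/
import Mathlib

section
/- For any integrable function f on [0,1], the integral over x in [0,1] of (x - 1/2)·(∫₀ˣ f(y)dy − ∫ₓ¹ f(y)dy) equals −∫₀¹ (x² − x) f(x) dx. In particular, if f is non-negative this quantity is non-negative. -/
open MeasureTheory intervalIntegral

/-- The selection gradient `∇E(f)(x) = ∫₀ˣ f − ∫ₓ¹ f`. -/
noncomputable def gradE (f : ℝ → ℝ) (x : ℝ) : ℝ :=
  (∫ y in (0:ℝ)..x, f y) - ∫ y in x..(1:ℝ), f y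

theorem fubini_key (f : ℝ → ℝ) (hf : IntegrableOn f (Set.Icc (0:ℝ) 1)) :
    (∫ x in (0:ℝ)..1, (x - 1/2) * ∫ y in (0:ℝ)..x, f y)
      = ∫ y in (0:ℝ)..1, (-(y^2 - y)/2) * f y := by
  have hfI : IntegrableOn f (Set.Ioc (0:ℝ) 1) := hf.mono_set Set.Ioc_subset_Icc_self
  set μ := volume.restrict (Set.Ioc (0:ℝ) 1) with hμ
  have hmeas : MeasurableSet {p : ℝ × ℝ | p.2 ≤ p.1} :=
    measurableSet_le measurable_snd measurable_fst
  set g : ℝ × ℝ → ℝ :=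
    Set.indicator {p : ℝ × ℝ | p.2 ≤ p.1} (fun p => (p.1 - 1/2) * f p.2) with hg
  have hx12 : Integrable (fun x : ℝ => x - 1/2) μ :=
    ((continuous_id.sub continuous_const).integrableOn_Ioc)
  have hint : Integrable g (μ.prod μ) :=
    (hx12.mul_prod hfI).indicator hmeas
  have hswap : ∫ x, ∫ y, g (x, y) ∂μ ∂μ = ∫ y, ∫ x, g (x, y) ∂μ ∂μ :=
    MeasureTheory.integral_integral_swap hint
  have hL : ∀ x ∈ Set.Ioc (0:ℝ) 1,
      (∫ y, g (x, y) ∂μ) = (x - 1/2) * ∫ y in (0:ℝ)..x, f y := by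
    intro x hx
    have h1 : (fun y => g (x, y))
        = Set.indicator (Set.Iic x) (fun y => (x - 1/2) * f y) := by
      funext y; by_cases h : y ≤ x <;> simp [hg, Set.indicator_apply, h]
    have h2 : Set.Iic x ∩ Set.Ioc (0:ℝ) 1 = Set.Ioc 0 x := by
      ext z
      simp only [Set.mem_inter_iff, Set.mem_Iic, Set.mem_Ioc]
      exact ⟨fun ⟨a, b, c⟩ => ⟨b, a⟩, fun ⟨a, b⟩ => ⟨b, a, b.trans hx.2⟩⟩
    rw [h1, hμ, MeasureTheory.integral_indicator measurableSet_Iic, Measure.restrict_restrict measurableSet_Iic,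
      h2, intervalIntegral.integral_of_le hx.1.le, MeasureTheory.integral_const_mul]
  have hR : ∀ y ∈ Set.Ioc (0:ℝ) 1,
      (∫ x, g (x, y) ∂μ) = (-(y^2 - y)/2) * f y := by
    intro y hy
    have h1 : (fun x => g (x, y))
        = Set.indicator (Set.Ici y) (fun x => (x - 1/2) * f y) := by
      funext x; by_cases h : y ≤ x <;> simp [hg, Set.indicator_apply, h]
    have h2 : Set.Ici y ∩ Set.Ioc (0:ℝ) 1 = Set.Icc y 1 := by
      ext z
      simp only [Set.mem_inter_iff, Set.mem_Ici, Set.mem_Ioc, Set.mem_Icc]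
      exact ⟨fun ⟨a, b, c⟩ => ⟨a, c⟩, fun ⟨a, b⟩ => ⟨a, hy.1.trans_le a, b⟩⟩
    have h3 : (∫ x in Set.Icc y 1, (x - 1/2)) = -(y^2 - y)/2 := by
      rw [MeasureTheory.integral_Icc_eq_integral_Ioc,
        ← intervalIntegral.integral_of_le hy.2,
        intervalIntegral.integral_sub intervalIntegrable_id (intervalIntegrable_const),
        integral_id, intervalIntegral.integral_const, smul_eq_mul]
      ring
    rw [h1, hμ, MeasureTheory.integral_indicator measurableSet_Ici, Measure.restrict_restrict measurableSet_Ici,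
      h2, MeasureTheory.integral_mul_const, h3]
  calc (∫ x in (0:ℝ)..1, (x - 1/2) * ∫ y in (0:ℝ)..x, f y)
      = ∫ x, ∫ y, g (x, y) ∂μ ∂μ := by
        rw [intervalIntegral.integral_of_le (by norm_num : (0:ℝ) ≤ 1), hμ]
        exact (setIntegral_congr_fun measurableSet_Ioc hL).symm
    _ = ∫ y, ∫ x, g (x, y) ∂μ ∂μ := hswap
    _ = ∫ y in (0:ℝ)..1, (-(y^2 - y)/2) * f y := by
        rw [intervalIntegral.integral_of_le (by norm_num : (0:ℝ) ≤ 1), hμ]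
        exact setIntegral_congr_fun measurableSet_Ioc hR

theorem stmt0 (f : ℝ → ℝ)
    (hf : IntegrableOn f (Set.Icc (0:ℝ) 1)) :
    (∫ x in (0:ℝ)..1, (x - 1/2) * gradE f x)
      = -∫ x in (0:ℝ)..1, (x^2 - x) * f x ∧
    ((∀ x ∈ Set.Icc (0:ℝ) 1, 0 ≤ f x) →
      0 ≤ ∫ x in (0:ℝ)..1, (x - 1/2) * gradE f x) := by
  have huIcc : Set.uIcc (0:ℝ) 1 = Set.Icc 0 1 := Set.uIcc_of_le zero_le_one
  have hfu : IntegrableOn f (Set.uIcc (0:ℝ) 1) := by rw [huIcc]; exact hf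
  have hfint : IntervalIntegrable f volume 0 1 := by
    rw [intervalIntegrable_iff_integrableOn_Icc_of_le zero_le_one]; exact hf
  have hFc : ContinuousOn (fun x => ∫ y in (0:ℝ)..x, f y) (Set.uIcc (0:ℝ) 1) :=
    continuousOn_primitive_interval hfu
  -- rewrite gradE on [0,1]
  have hgrad : ∀ x ∈ Set.uIcc (0:ℝ) 1,
      (x - 1/2) * gradE f x
        = (x - 1/2) * (2 * ∫ y in (0:ℝ)..x, f y) - (x - 1/2) * ∫ y in (0:ℝ)..1, f y := by
    intro x hx
    rw [huIcc] at hx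
    have h1 : IntervalIntegrable f volume 0 x :=
      hfint.mono_set (by rw [huIcc, Set.uIcc_of_le hx.1]; exact Set.Icc_subset_Icc le_rfl hx.2)
    have h2 : IntervalIntegrable f volume x 1 :=
      hfint.mono_set (by rw [huIcc, Set.uIcc_of_le hx.2]; exact Set.Icc_subset_Icc hx.1 le_rfl)
    have hadd := intervalIntegral.integral_add_adjacent_intervals h1 h2
    have hB : (∫ y in x..(1:ℝ), f y)
        = (∫ y in (0:ℝ)..1, f y) - ∫ y in (0:ℝ)..x, f y := by linarith [hadd]
    simp only [gradE]
    rw [hB]; ring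
  have hmain : (∫ x in (0:ℝ)..1, (x - 1/2) * gradE f x)
      = -∫ x in (0:ℝ)..1, (x^2 - x) * f x := by
    rw [intervalIntegral.integral_congr hgrad]
    have hi1 : IntervalIntegrable (fun x => (x - 1/2) * (2 * ∫ y in (0:ℝ)..x, f y))
        volume 0 1 :=
      (((continuousOn_id.sub continuousOn_const).mul
        (continuousOn_const.mul hFc))).intervalIntegrable
    have hi2 : IntervalIntegrable (fun x : ℝ => (x - 1/2) * ∫ y in (0:ℝ)..1, f y)
        volume 0 1 :=
      ((continuous_id.sub continuous_const).mul continuous_const).intervalIntegrable 0 1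
    rw [intervalIntegral.integral_sub hi1 hi2]
    have hz : (∫ x in (0:ℝ)..1, (x - 1/2) * ∫ y in (0:ℝ)..1, f y) = 0 := by
      rw [intervalIntegral.integral_mul_const,
        intervalIntegral.integral_sub intervalIntegrable_id intervalIntegrable_const,
        integral_id, intervalIntegral.integral_const]
      norm_num
    have h2F : (∫ x in (0:ℝ)..1, (x - 1/2) * (2 * ∫ y in (0:ℝ)..x, f y))
        = 2 * ∫ x in (0:ℝ)..1, (x - 1/2) * ∫ y in (0:ℝ)..x, f y := by
      rw [← intervalIntegral.integral_const_mul]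
      apply intervalIntegral.integral_congr
      intro x _; ring
    rw [hz, h2F, fubini_key f hf, sub_zero, ← intervalIntegral.integral_neg,
      ← intervalIntegral.integral_const_mul]
    apply intervalIntegral.integral_congr
    intro x _; ring
  refine ⟨hmain, fun hpos => ?_⟩
  rw [hmain, ← intervalIntegral.integral_neg]
  apply intervalIntegral.integral_nonneg zero_le_one
  intro u hu
  have h1 : 0 ≤ u - u^2 := by nlinarith [hu.1, hu.2]
  have := mul_nonneg h1 (hpos u hu)
  nlinarith
end

section
/- Let A be the constrained selection gradient: Af(x) = ∫₀ˣ f − ∫ₓ¹ f − 12·H(w(f))·(x − 1/2)·∫₀¹ (y − 1/2)(∫₀ʸ f − ∫ᵧ¹ f) dy, where w(f) = ∫₀¹ (x − 1/2) f(x) dx and H is the Heaviside function. Then for f ∈ L^p[0,1] (1 ≤ p ≤ ∞), the only solutions of Af = λf with f not identically zero are: λ = 0 with f a constant function. -/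
open MeasureTheory intervalIntegral ENNReal
open Set Filter




lemma key_pos {t : ℝ} (ht : t ≠ 0) : 0 < 1 + (t - 1) * Real.exp t := by
  have h := Real.add_one_lt_exp (x := -t) (by simpa using ht)
  have hexp : 0 < Real.exp t := Real.exp_pos t
  have h2 : (1 - t) * Real.exp t < Real.exp (-t) * Real.exp t :=
    mul_lt_mul_of_pos_right (by linarith) hexp
  rw [← Real.exp_add, neg_add_cancel, Real.exp_zero] at h2
  nlinarith

lemma phi_ne {m : ℝ} (hm : m ≠ 0) : m * (Real.exp m + 1) ≠ 2 * (Real.exp m - 1) := by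
  set φ : ℝ → ℝ := fun t => t * (Real.exp t + 1) - 2 * (Real.exp t - 1) with hφ
  have hder : ∀ t : ℝ, HasDerivAt φ (1 + (t - 1) * Real.exp t) t := by
    intro t
    have h1 : HasDerivAt (fun t : ℝ => t * (Real.exp t + 1))
        (1 * (Real.exp t + 1) + t * Real.exp t) t :=
      (hasDerivAt_id t).mul ((Real.hasDerivAt_exp t).add_const 1)
    have h2 : HasDerivAt (fun t : ℝ => 2 * (Real.exp t - 1)) (2 * Real.exp t) t :=
      ((Real.hasDerivAt_exp t).sub_const 1).const_mul 2
    have := h1.sub h2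
    refine this.congr_deriv ?_
    ring
  have hmono : ∀ s : Set ℝ, Convex ℝ s → (∀ x ∈ interior s, x ≠ 0) → StrictMonoOn φ s := by
    intro s hs h0
    apply strictMonoOn_of_deriv_pos hs (fun x _ => (hder x).continuousAt.continuousWithinAt)
    intro x hx
    rw [(hder x).deriv]
    exact key_pos (h0 x hx)
  intro hcontra
  have hφ0 : φ m = 0 := by simp [hφ]; linarith
  rcases lt_or_gt_of_ne hm with h | h
  · have := (hmono (Set.Iic 0) (convex_Iic 0) (by intro x hx; rw [interior_Iic] at hx; exact ne_of_lt hx)) (Set.mem_Iic.2 h.le) (Set.mem_Iic.2 le_rfl) h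
    simp [hφ] at this
    nlinarith [this]
  · have := (hmono (Set.Ici 0) (convex_Ici 0) (by intro x hx; rw [interior_Ici] at hx; exact ne_of_gt hx)) (Set.mem_Ici.2 le_rfl) (Set.mem_Ici.2 h.le) h
    simp [hφ] at this
    nlinarith [this]


lemma prim_zero {h : ℝ → ℝ} (hi : Integrable h (volume : Measure ℝ))
    (h0 : ∀ x ∈ Set.Icc (0:ℝ) 1, ∫ t in (0:ℝ)..x, h t = 0) :
    ∀ᵐ x ∂(volume.restrict (Set.Icc (0:ℝ) 1)), h x = 0 := by
  have hloc : LocallyIntegrable h (volume : Measure ℝ) := hi.locallyIntegrable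
  have hae := IsUnifLocDoublingMeasure.ae_tendsto_average (μ := (volume : Measure ℝ)) hloc 1
  have h2 : ∀ᵐ x ∂(volume.restrict (Set.Icc (0:ℝ) 1)), x ∈ Set.Ioo (0:ℝ) 1 := by
    refine (ae_restrict_iff' measurableSet_Icc).2 ?_
    have hz : (volume : Measure ℝ) ({0, 1} : Set ℝ) = 0 :=
      (Set.toFinite _).measure_zero volume
    filter_upwards [measure_eq_zero_iff_ae_notMem.1 hz] with x hx hxI
    simp only [Set.mem_insert_iff, Set.mem_singleton_iff, not_or] at hx
    exact ⟨lt_of_le_of_ne hxI.1 (Ne.symm hx.1), lt_of_le_of_ne hxI.2 hx.2⟩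
  filter_upwards [ae_restrict_of_ae hae, h2] with x hx hxIoo
  have hball : ∀ᶠ (r : ℝ) in nhdsWithin (0:ℝ) (Set.Ioi 0),
      x ∈ Metric.closedBall ((fun _ : ℝ => x) r) (1 * r) := by
    filter_upwards [self_mem_nhdsWithin] with r hr
    exact Metric.mem_closedBall_self (by simp at hr ⊢; linarith)
  have hx2 := hx (ι := ℝ) (l := nhdsWithin 0 (Set.Ioi 0)) (fun _ => x) (fun r => r)
    tendsto_id hball
  have hev : ∀ᶠ r in nhdsWithin (0:ℝ) (Set.Ioi 0),
      (⨍ y in Metric.closedBall x r, h y) = 0 := by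
    have hmin : (0:ℝ) < min x (1 - x) := lt_min hxIoo.1 (by linarith [hxIoo.2])
    filter_upwards [Ioo_mem_nhdsGT_of_mem (Set.left_mem_Ico.2 hmin)] with r hr
    have hr0 : 0 < r := hr.1
    have hrx : r < x := lt_of_lt_of_le hr.2 (min_le_left x (1-x))
    have hrx' : r < 1 - x := lt_of_lt_of_le hr.2 (min_le_right x (1-x))
    have hsub : Set.Icc (x - r) (x + r) ⊆ Set.Icc (0:ℝ) 1 :=
      Set.Icc_subset_Icc (by linarith) (by linarith)
    have hint : ∫ y in Metric.closedBall x r, h y = 0 := by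
      rw [Real.closedBall_eq_Icc, integral_Icc_eq_integral_Ioc,
        ← intervalIntegral.integral_of_le (by linarith : x - r ≤ x + r)]
      have e1 : IntervalIntegrable h volume 0 (x - r) := hi.intervalIntegrable
      have e2 : IntervalIntegrable h volume (x - r) (x + r) := hi.intervalIntegrable
      have hadd := intervalIntegral.integral_add_adjacent_intervals e1 e2
      have v1 := h0 (x - r) (hsub (Set.left_mem_Icc.2 (by linarith)))
      have v2 := h0 (x + r) (hsub (Set.right_mem_Icc.2 (by linarith)))
      linarith
    rw [setAverage_eq, hint]
    simp
  have hzero : Tendsto (fun _ : ℝ => (0:ℝ)) (nhdsWithin (0:ℝ) (Set.Ioi 0)) (nhds (h x)) :=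
    Tendsto.congr' (by filter_upwards [hev] with r hr using hr) hx2
  exact (tendsto_nhds_unique tendsto_const_nhds hzero).symm

/-- The Heaviside function: `1` for `t ≥ 0`, `0` for `t < 0`. -/
noncomputable def heav (t : ℝ) : ℝ := if 0 ≤ t then 1 else 0

/-- The MCA-constraint functional `w(f) = ∫₀¹ (x − 1/2) f(x) dx`. -/
noncomputable def wfun (f : ℝ → ℝ) : ℝ := ∫ x in (0:ℝ)..1, (x - 1/2) * f x

/-- The constrained selection gradient `A`. -/
noncomputable def Aop (f : ℝ → ℝ) (x : ℝ) : ℝ :=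
  gradE f x - 12 * heav (wfun f) * (x - 1/2) *
    ∫ y in (0:ℝ)..1, (y - 1/2) * gradE f y

/-- The only eigenfunctions of `A` on `L^p[0,1]` are the constant functions,
with eigenvalue `0`. -/
theorem stmt6 (p : ℝ≥0∞) (hp : 1 ≤ p) (f : ℝ → ℝ) (lam : ℝ)
    (hf : MemLp f p (volume.restrict (Set.Icc (0:ℝ) 1)))
    (hnz : ¬ f =ᵐ[volume.restrict (Set.Icc (0:ℝ) 1)] (fun _ => (0:ℝ)))
    (heig : Aop f =ᵐ[volume.restrict (Set.Icc (0:ℝ) 1)] (fun x => lam * f x)) :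
    lam = 0 ∧ ∃ c : ℝ, f =ᵐ[volume.restrict (Set.Icc (0:ℝ) 1)] (fun _ => c) := by
  have hfin : IsFiniteMeasure (volume.restrict (Set.Icc (0:ℝ) 1)) := by
    constructor
    rw [Measure.restrict_apply_univ, Real.volume_Icc]
    norm_num
  have hfi : IntegrableOn f (Set.Icc (0:ℝ) 1) volume := hf.integrable hp
  set θ : ℝ := ∫ y in (0:ℝ)..1, (y - 1/2) * gradE f y with hθdef
  set C : ℝ := 12 * heav (wfun f) * θ with hCdef
  set F : ℝ → ℝ := fun x => ∫ t in (0:ℝ)..x, f t with hFdef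
  have hiis : ∀ a b : ℝ, a ∈ Set.Icc (0:ℝ) 1 → b ∈ Set.Icc (0:ℝ) 1 →
      IntervalIntegrable f volume a b := by
    intro a b ha hb
    refine (hfi.mono_set ?_).intervalIntegrable
    rw [show Set.uIcc a b = Set.Icc (min a b) (max a b) from rfl]
    exact Set.Icc_subset_Icc (le_min ha.1 hb.1) (max_le ha.2 hb.2)
  have h01 : (0:ℝ) ∈ Set.Icc (0:ℝ) 1 := by norm_num
  have h11 : (1:ℝ) ∈ Set.Icc (0:ℝ) 1 := by norm_num
  have hgradE : ∀ x ∈ Set.Icc (0:ℝ) 1, gradE f x = 2 * F x - F 1 := by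
    intro x hx
    have hadd := intervalIntegral.integral_add_adjacent_intervals
      (hiis 0 x h01 hx) (hiis x 1 hx h11)
    simp only [gradE, hFdef]
    linarith
  have hAop : ∀ x ∈ Set.Icc (0:ℝ) 1, Aop f x = 2 * F x - F 1 - C * (x - 1/2) := by
    intro x hx
    simp only [Aop, hgradE x hx, ← hθdef, hCdef]
    ring
  have hD : ∀ᵐ x ∂(volume.restrict (Set.Icc (0:ℝ) 1)),
      2 * F x - F 1 - C * (x - 1/2) = lam * f x := by
    filter_upwards [heig, ae_restrict_mem measurableSet_Icc] with x hx hxI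
    rw [← hAop x hxI]; exact hx
  have hF0 : F 0 = 0 := intervalIntegral.integral_same
  have hFcont : ContinuousOn F (Set.Icc (0:ℝ) 1) := by
    have := intervalIntegral.continuousOn_primitive_interval (a := (0:ℝ)) (b := 1)
      (μ := volume) (f := f) (by rwa [Set.uIcc_of_le (by norm_num : (0:ℝ) ≤ 1)])
    rwa [Set.uIcc_of_le (by norm_num : (0:ℝ) ≤ 1)] at this
  by_cases hlam : lam = 0
  · subst hlam
    refine ⟨rfl, C/2, ?_⟩
    have hD0 : ∀ᵐ x ∂volume, x ∈ Set.Icc (0:ℝ) 1 →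
        2 * F x - F 1 - C * (x - 1/2) = 0 := by
      rw [← ae_restrict_iff' measurableSet_Icc]
      filter_upwards [hD] with x hx
      simpa using hx
    -- the primitive of D vanishes on [0,1]
    set D : ℝ → ℝ := fun x => 2 * F x - F 1 - C * (x - 1/2) with hDdef
    have hDcont : ContinuousOn D (Set.Icc (0:ℝ) 1) := by
      exact ((continuousOn_const.mul hFcont).sub continuousOn_const).sub
        (continuousOn_const.mul (continuousOn_id.sub continuousOn_const))
    have hDii : ∀ x ∈ Set.Icc (0:ℝ) 1, IntervalIntegrable D volume 0 x := by
      intro x hx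
      refine ((hDcont.mono ?_).intervalIntegrable)
      rw [show Set.uIcc 0 x = Set.Icc (min 0 x) (max 0 x) from rfl]
      exact Set.Icc_subset_Icc (le_min le_rfl hx.1) (max_le (by norm_num) hx.2)
    have hΦ0 : ∀ x ∈ Set.Icc (0:ℝ) 1, (∫ t in (0:ℝ)..x, D t) = 0 := by
      intro x hx
      have : (∫ t in (0:ℝ)..x, D t) = ∫ t in (0:ℝ)..x, (0:ℝ) := by
        apply intervalIntegral.integral_congr_ae
        filter_upwards [hD0] with t ht htI
        apply ht
        rw [Set.uIoc_of_le hx.1] at htI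
        exact ⟨le_of_lt htI.1, le_trans htI.2 hx.2⟩
      simpa using this
    have hDzero : ∀ x ∈ Set.Ico (0:ℝ) 1, D x = 0 := by
      intro x hx
      have hxI : x ∈ Set.Icc (0:ℝ) 1 := ⟨hx.1, hx.2.le⟩
      have hmem : Set.Icc (0:ℝ) 1 ∈ nhdsWithin x (Set.Ioi x) := by
        rw [mem_nhdsWithin]
        exact ⟨Set.Iio 1, isOpen_Iio, hx.2, fun y hy =>
          ⟨le_trans hx.1 (le_of_lt hy.2), le_of_lt hy.1⟩⟩
      have hmem' : Set.Icc (0:ℝ) 1 ∈ nhdsWithin x (Set.Ici x) := by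
        rw [mem_nhdsWithin]
        exact ⟨Set.Iio 1, isOpen_Iio, hx.2, fun y hy =>
          ⟨le_trans hx.1 hy.2, le_of_lt hy.1⟩⟩
      have hder : HasDerivWithinAt (fun u => ∫ t in (0:ℝ)..u, D t) (D x)
          (Set.Ici x) x := by
        apply intervalIntegral.integral_hasDerivWithinAt_right
          (hDii x hxI) ⟨Set.Icc 0 1, hmem, (hDcont.aestronglyMeasurable measurableSet_Icc)⟩
        exact (hDcont x hxI).mono_of_mem_nhdsWithin hmem
      have hder0 : HasDerivWithinAt (fun u => ∫ t in (0:ℝ)..u, D t) 0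
          (Set.Ici x) x := by
        apply (hasDerivWithinAt_const x (Set.Ici x) (0:ℝ)).congr_of_eventuallyEq
        · filter_upwards [hmem'] with y hy
          exact hΦ0 y hy
        · exact hΦ0 x hxI
      have := hder.derivWithin (uniqueDiffOn_Ici x x Set.self_mem_Ici)
      rw [hder0.derivWithin (uniqueDiffOn_Ici x x Set.self_mem_Ici)] at this
      exact this.symm
    have hF1 : F 1 = C/2 := by
      have := hDzero 0 (by norm_num)
      simp only [hDdef, hF0] at this
      linarith
    have hFlin : ∀ x ∈ Set.Icc (0:ℝ) 1, F x = (C/2) * x := by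
      intro x hx
      rcases lt_or_eq_of_le hx.2 with h | h
      · have := hDzero x ⟨hx.1, h⟩
        simp only [hDdef, hF1] at this
        linarith
      · rw [h, hF1]; ring
    -- Lebesgue differentiation
    have hind : Integrable (Set.indicator (Set.Icc (0:ℝ) 1) (fun t => f t - C/2))
        volume := by
      rw [integrable_indicator_iff measurableSet_Icc]
      exact hfi.sub (integrableOn_const (by rw [Real.volume_Icc]; norm_num))
    have hprim := prim_zero hind ?_
    · filter_upwards [hprim, ae_restrict_mem measurableSet_Icc] with x hx hxI
      have : f x - C/2 = 0 := by
        rwa [Set.indicator_of_mem hxI] at hx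
      linarith
    · intro x hx
      have hEq : Set.EqOn (Set.indicator (Set.Icc (0:ℝ) 1) (fun t => f t - C/2))
          (fun t => f t - C/2) (Set.uIcc 0 x) := by
        intro t ht
        apply Set.indicator_of_mem
        rw [Set.uIcc_of_le hx.1] at ht
        exact ⟨ht.1, le_trans ht.2 hx.2⟩
      rw [intervalIntegral.integral_congr hEq,
        intervalIntegral.integral_sub (hiis 0 x h01 hx) intervalIntegrable_const,
        intervalIntegral.integral_const]
      have := hFlin x hx
      simp only [hFdef] at this ⊢
      rw [this]
      simp
      ring
  · exfalso
    set G : ℝ → ℝ := fun x => lam⁻¹ * (2 * F x - F 1 - C * (x - 1/2)) with hGdef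
    have hfg : f =ᵐ[volume.restrict (Set.Icc (0:ℝ) 1)] G := by
      filter_upwards [hD] with x hx
      show f x = lam⁻¹ * (2 * F x - F 1 - C * (x - 1/2))
      rw [hx]
      field_simp
    have hGcont : ContinuousOn G (Set.Icc (0:ℝ) 1) :=
      continuousOn_const.mul (((continuousOn_const.mul hFcont).sub continuousOn_const).sub
        (continuousOn_const.mul (continuousOn_id.sub continuousOn_const)))
    have hfG_ae : ∀ᵐ t ∂volume, t ∈ Set.Icc (0:ℝ) 1 → f t = G t :=
      (ae_restrict_iff' measurableSet_Icc).1 hfg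
    have hFP : ∀ x ∈ Set.Icc (0:ℝ) 1, F x = ∫ t in (0:ℝ)..x, G t := by
      intro x hx
      apply intervalIntegral.integral_congr_ae
      filter_upwards [hfG_ae] with t ht htI
      apply ht
      rw [Set.uIoc_of_le hx.1] at htI
      exact ⟨htI.1.le, htI.2.trans hx.2⟩
    have hGii : ∀ x ∈ Set.Icc (0:ℝ) 1, IntervalIntegrable G volume 0 x := by
      intro x hx
      refine ((hGcont.mono ?_).intervalIntegrable)
      rw [show Set.uIcc 0 x = Set.Icc (min 0 x) (max 0 x) from rfl]
      exact Set.Icc_subset_Icc (le_min le_rfl hx.1) (max_le (by norm_num) hx.2)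
    have hFder : ∀ x ∈ Set.Ico (0:ℝ) 1, HasDerivWithinAt F (G x) (Set.Ici x) x := by
      intro x hx
      have hxI : x ∈ Set.Icc (0:ℝ) 1 := ⟨hx.1, hx.2.le⟩
      have hmem : Set.Icc (0:ℝ) 1 ∈ nhdsWithin x (Set.Ioi x) := by
        rw [mem_nhdsWithin]
        exact ⟨Set.Iio 1, isOpen_Iio, hx.2, fun y hy =>
          ⟨le_trans hx.1 (le_of_lt hy.2), le_of_lt hy.1⟩⟩
      have hmem' : Set.Icc (0:ℝ) 1 ∈ nhdsWithin x (Set.Ici x) := by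
        rw [mem_nhdsWithin]
        exact ⟨Set.Iio 1, isOpen_Iio, hx.2, fun y hy =>
          ⟨le_trans hx.1 hy.2, le_of_lt hy.1⟩⟩
      have hP : HasDerivWithinAt (fun u => ∫ t in (0:ℝ)..u, G t) (G x)
          (Set.Ici x) x :=
        intervalIntegral.integral_hasDerivWithinAt_right (hGii x hxI)
          ⟨Set.Icc 0 1, hmem, hGcont.aestronglyMeasurable measurableSet_Icc⟩
          ((hGcont x hxI).mono_of_mem_nhdsWithin hmem)
      apply hP.congr_of_eventuallyEq
      · filter_upwards [hmem'] with y hy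
        exact hFP y hy
      · exact hFP x hxI
    set m : ℝ := 2 / lam with hmdef
    have hm : m ≠ 0 := div_ne_zero two_ne_zero hlam
    have hGder : ∀ x ∈ Set.Ico (0:ℝ) 1,
        HasDerivWithinAt G (m * (G x - C/2)) (Set.Ici x) x := by
      intro x hx
      have h1 : HasDerivWithinAt (fun u => lam⁻¹ * (2 * F u - F 1 - C * (u - 1/2)))
          (lam⁻¹ * (2 * G x - C * 1)) (Set.Ici x) x :=
        ((((hFder x hx).const_mul 2).sub_const (F 1)).sub
          (((hasDerivWithinAt_id x (Set.Ici x)).sub_const (1/2)).const_mul C)).const_mul lam⁻¹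
      have heq : m * (G x - C/2) = lam⁻¹ * (2 * G x - C * 1) := by
        rw [hmdef]; field_simp
      rw [heq]
      exact h1
    set k : ℝ → ℝ := fun u => (G u - C/2) * Real.exp (-(m * u)) with hkdef
    have hkder : ∀ x ∈ Set.Ico (0:ℝ) 1, HasDerivWithinAt k 0 (Set.Ici x) x := by
      intro x hx
      have he0 : HasDerivAt (fun u : ℝ => -(m * u)) (-m) x := by
        simpa using ((hasDerivAt_id x).const_mul (-m))
      have he : HasDerivAt (fun u : ℝ => Real.exp (-(m * u)))
          (Real.exp (-(m * x)) * -m) x := he0.exp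
      have hprod := ((hGder x hx).sub_const (C/2)).mul he.hasDerivWithinAt
      have : m * (G x - C/2) * Real.exp (-(m * x)) +
          (G x - C/2) * (Real.exp (-(m * x)) * -m) = 0 := by ring
      rw [this] at hprod
      exact hprod
    have hkcont : ContinuousOn k (Set.Icc (0:ℝ) 1) :=
      (hGcont.sub continuousOn_const).mul
        ((Real.continuous_exp.comp ((continuous_const.mul continuous_id).neg)).continuousOn)
    have hkconst := constant_of_has_deriv_right_zero hkcont hkder
    set a0 : ℝ := G 0 - C/2 with ha0def
    set E : ℝ := Real.exp m with hEdef
    have hE1 : (0:ℝ) < 1 + E := by positivity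
    have hGform : ∀ x ∈ Set.Icc (0:ℝ) 1, G x = C/2 + a0 * Real.exp (m * x) := by
      intro x hx
      have hk0 : k x = k 0 := hkconst x hx
      have : (G x - C/2) * Real.exp (-(m * x)) = a0 := by
        rw [hkdef] at hk0
        simpa using hk0
      rw [Real.exp_neg] at this
      have h2 : G x - C/2 = a0 * Real.exp (m * x) := by
        field_simp at this
        linear_combination this / 2
      linarith [h2]
    have hsum : G 0 + G 1 = 0 := by
      have h0 : lam * G 0 = -F 1 + C/2 := by
        rw [hGdef]
        show lam * (lam⁻¹ * (2 * F 0 - F 1 - C * (0 - 1/2))) = _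
        rw [hF0]; field_simp; ring
      have h1 : lam * G 1 = F 1 - C/2 := by
        rw [hGdef]
        show lam * (lam⁻¹ * (2 * F 1 - F 1 - C * (1 - 1/2))) = _
        field_simp; ring
      have : lam * (G 0 + G 1) = 0 := by rw [mul_add, h0, h1]; ring
      exact (mul_eq_zero.1 this).resolve_left hlam
    have hEQ2 : C + a0 * (1 + E) = 0 := by
      have hg0 := hGform 0 h01
      have hg1 := hGform 1 h11
      rw [mul_zero, Real.exp_zero] at hg0
      rw [mul_one] at hg1
      rw [hg0, hg1] at hsum
      rw [hEdef]
      linear_combination hsum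
    clear_value m a0 E
    -- w = a0 * c
    have hw1 : wfun f = ∫ x in (0:ℝ)..1, (x - 1/2) * G x := by
      apply intervalIntegral.integral_congr_ae
      filter_upwards [hfG_ae] with t ht htI
      rw [Set.uIoc_of_le (by norm_num : (0:ℝ) ≤ 1)] at htI
      rw [ht ⟨htI.1.le, htI.2⟩]
    have hw2 : (∫ x in (0:ℝ)..1, (x - 1/2) * G x)
        = ∫ x in (0:ℝ)..1, (x - 1/2) * (C/2 + a0 * Real.exp (m * x)) := by
      apply intervalIntegral.integral_congr
      intro t ht
      rw [Set.uIcc_of_le (by norm_num : (0:ℝ) ≤ 1)] at ht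
      show (t - 1/2) * G t = (t - 1/2) * (C/2 + a0 * Real.exp (m * t))
      rw [hGform t ht]
    set Ψ : ℝ → ℝ := fun u => C/2 * (u^2/2 - u/2)
      + a0 * (((u - 1/2)/m - 1/m^2) * Real.exp (m * u)) with hΨdef
    have hΨder : ∀ u : ℝ, HasDerivAt Ψ ((u - 1/2) * (C/2 + a0 * Real.exp (m * u))) u := by
      intro u
      have h1 : HasDerivAt (fun u : ℝ => u^2/2 - u/2) (u - 1/2) u := by
        have := ((hasDerivAt_pow 2 u).div_const 2).sub ((hasDerivAt_id u).div_const 2)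
        refine this.congr_deriv ?_
        simp
      have h3 : HasDerivAt (fun u : ℝ => Real.exp (m * u)) (Real.exp (m * u) * m) u := by
        have h0 : HasDerivAt (fun u : ℝ => m * u) m u := by
          simpa using (hasDerivAt_id u).const_mul m
        exact h0.exp
      have h2 : HasDerivAt (fun u : ℝ => (u - 1/2)/m - 1/m^2) (1/m) u := by
        have := (((hasDerivAt_id u).sub_const (1/2)).div_const m).sub_const (1/m^2)
        simpa using this
      have hmul := h2.mul h3
      have htot := (h1.const_mul (C/2)).add (hmul.const_mul a0)
      refine htot.congr_deriv ?_
      field_simp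
      ring
    have hw3 : (∫ x in (0:ℝ)..1, (x - 1/2) * (C/2 + a0 * Real.exp (m * x)))
        = Ψ 1 - Ψ 0 := by
      apply intervalIntegral.integral_eq_sub_of_hasDerivAt (fun u _ => hΨder u)
      apply Continuous.intervalIntegrable
      exact (continuous_id.sub continuous_const).mul (continuous_const.add
        (continuous_const.mul (Real.continuous_exp.comp (continuous_const.mul continuous_id))))
    have hw : wfun f = a0 * (((1/2)/m - 1/m^2) * E + ((1/2)/m + 1/m^2)) := by
      rw [hw1, hw2, hw3, hΨdef]
      simp only [hEdef]
      norm_num [Real.exp_zero]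
      ring
    have hc : ((1/2)/m - 1/m^2) * E + ((1/2)/m + 1/m^2) ≠ 0 := by
      intro h
      apply phi_ne hm
      rw [hEdef] at h
      field_simp at h
      have h2 : m * (m * (Real.exp m + 1) - 2 * (Real.exp m - 1)) = 0 := by
        linear_combination m * h
      have h3 := (mul_eq_zero.1 h2).resolve_left hm
      linarith
    -- relation lam * w = θ - C/12
    have hAop' : ∀ x : ℝ, Aop f x = gradE f x - C * (x - 1/2) := by
      intro x
      rw [hCdef]
      simp only [Aop, ← hθdef]
      ring
    have hint1 : IntervalIntegrable (fun x => (x - 1/2) * gradE f x) volume 0 1 := by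
      have hcont : ContinuousOn (fun x : ℝ => (x - 1/2) * (2 * F x - F 1))
          (Set.Icc (0:ℝ) 1) :=
        (continuousOn_id.sub continuousOn_const).mul
          ((continuousOn_const.mul hFcont).sub continuousOn_const)
      have hio : IntegrableOn (fun x => (x - 1/2) * gradE f x) (Set.Icc (0:ℝ) 1) volume := by
        apply (hcont.integrableOn_Icc).congr_fun ?_ measurableSet_Icc
        intro x hx
        show (x - 1/2) * (2 * F x - F 1) = (x - 1/2) * gradE f x
        rw [hgradE x hx]
      have : IntegrableOn (fun x => (x - 1/2) * gradE f x) (Set.uIcc (0:ℝ) 1) volume := by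
        rwa [Set.uIcc_of_le (by norm_num : (0:ℝ) ≤ 1)]
      exact this.intervalIntegrable
    have hint2 : IntervalIntegrable (fun x : ℝ => C * ((x - 1/2) * (x - 1/2))) volume 0 1 := by
      apply Continuous.intervalIntegrable
      fun_prop
    have hs1 : (∫ x in (0:ℝ)..1, (x - 1/2) * Aop f x)
        = ∫ x in (0:ℝ)..1, (x - 1/2) * (lam * f x) := by
      apply intervalIntegral.integral_congr_ae
      filter_upwards [(ae_restrict_iff' measurableSet_Icc).1 heig] with x hx hxI
      rw [Set.uIoc_of_le (by norm_num : (0:ℝ) ≤ 1)] at hxI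
      rw [hx ⟨hxI.1.le, hxI.2⟩]
    have hs2 : (∫ x in (0:ℝ)..1, (x - 1/2) * (lam * f x)) = lam * wfun f := by
      have e : (∫ x in (0:ℝ)..1, (x - 1/2) * (lam * f x))
          = ∫ x in (0:ℝ)..1, lam * ((x - 1/2) * f x) := by
        apply intervalIntegral.integral_congr
        intro x _
        ring
      rw [e, intervalIntegral.integral_const_mul, wfun]
    have he2 : (∫ x in (0:ℝ)..1, (x - 1/2) * (x - 1/2)) = 1/12 := by
      have hder : ∀ u : ℝ, HasDerivAt (fun u : ℝ => (u - 1/2)^3/3)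
          ((u - 1/2) * (u - 1/2)) u := by
        intro u
        have := (((hasDerivAt_id u).sub_const (1/2)).pow 3).div_const 3
        refine this.congr_deriv ?_
        simp
        ring
      rw [intervalIntegral.integral_eq_sub_of_hasDerivAt (fun u _ => hder u)
        (Continuous.intervalIntegrable (by fun_prop) 0 1)]
      norm_num
    have hs3 : (∫ x in (0:ℝ)..1, (x - 1/2) * Aop f x) = θ - C * (1/12) := by
      have e1 : (∫ x in (0:ℝ)..1, (x - 1/2) * Aop f x)
          = ∫ x in (0:ℝ)..1, ((x - 1/2) * gradE f x - C * ((x - 1/2) * (x - 1/2))) := by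
        apply intervalIntegral.integral_congr
        intro x _
        show (x - 1/2) * Aop f x = (x - 1/2) * gradE f x - C * ((x - 1/2) * (x - 1/2))
        rw [hAop' x]
        ring
      rw [e1, intervalIntegral.integral_sub hint1 hint2,
        intervalIntegral.integral_const_mul, he2, ← hθdef]
    have hθw : lam * wfun f = θ - C * (1/12) := by
      rw [← hs2, ← hs1, hs3]
    -- case analysis on heaviside
    have hfinal : C = 0 ∧ a0 = 0 := by
      by_cases h0w : 0 ≤ wfun f
      · have hH : heav (wfun f) = 1 := by simp [heav, h0w]
        have hCθ : C = 12 * θ := by rw [hCdef, hH]; ring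
        have hw0 : wfun f = 0 := by
          have hlin : lam * wfun f = 0 := by rw [hθw, hCθ]; ring
          exact (mul_eq_zero.1 hlin).resolve_left hlam
        have hac : a0 * (((1/2)/m - 1/m^2) * E + ((1/2)/m + 1/m^2)) = 0 := by
          rw [← hw, hw0]
        have ha0 : a0 = 0 := (mul_eq_zero.1 hac).resolve_right hc
        have hC : C = 0 := by rw [ha0] at hEQ2; simpa using hEQ2
        exact ⟨hC, ha0⟩
      · have hH : heav (wfun f) = 0 := by simp [heav, h0w]
        have hC : C = 0 := by rw [hCdef, hH]; ring
        have ha0 : a0 = 0 := by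
          rw [hC] at hEQ2
          have : a0 * (1 + E) = 0 := by linarith
          rcases mul_eq_zero.1 this with h | h
          · exact h
          · linarith
        exact ⟨hC, ha0⟩
    apply hnz
    refine hfg.trans ?_
    apply (ae_restrict_iff' measurableSet_Icc).2
    apply Eventually.of_forall
    intro x hx
    rw [hGform x hx, hfinal.1, hfinal.2]
    simp
end

section
/- For functions f with MCA(f) = 1/2, the L² adjoint of the constrained selection gradient A is given by A*v(x) = −(∫₀ˣ v(y)dy − ∫ₓ¹ v(y)dy) + 12(x² − x)∫₀¹ (y − 1/2) v(y) dy; that is, ⟨Au, v⟩ = ⟨u, A*v⟩ for all u, v ∈ L²[0,1]. -/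
open MeasureTheory intervalIntegral ENNReal

/-- The mean competitive ability. -/
noncomputable def mca (f : ℝ → ℝ) : ℝ :=
  (∫ x in (0:ℝ)..1, x * f x) / (∫ x in (0:ℝ)..1, f x)

/-- The `L²` adjoint of `A`. -/
noncomputable def Astar (v : ℝ → ℝ) (x : ℝ) : ℝ :=
  -gradE v x + 12 * (x^2 - x) * ∫ y in (0:ℝ)..1, (y - 1/2) * v y

section Aux

open Set

/-- Fubini for the triangle `{0 < y ≤ x ≤ 1}`. -/
lemma swap_Ioc (f g : ℝ → ℝ) (hf : IntegrableOn f (Ioc (0:ℝ) 1))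
    (hg : IntegrableOn g (Ioc (0:ℝ) 1)) :
    (∫ x in Ioc (0:ℝ) 1, g x * ∫ y in Ioc (0:ℝ) x, f y)
      = ∫ y in Ioc (0:ℝ) 1, f y * ∫ x in Ioc y 1, g x := by
  set μ := volume.restrict (Ioc (0:ℝ) 1) with hμ
  set F : ℝ → ℝ → ℝ := fun x y => if y ≤ x then g x * f y else 0 with hFdef
  have hFint : Integrable (Function.uncurry F) (μ.prod μ) := by
    have : Function.uncurry F =
        {p : ℝ × ℝ | p.2 ≤ p.1}.indicator (fun p => g p.1 * f p.2) := by
      funext p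
      simp [Function.uncurry, hFdef, Set.indicator_apply, Set.mem_setOf_eq]
    rw [this]
    exact (hg.mul_prod hf).indicator (measurableSet_le measurable_snd measurable_fst)
  have hswap : (∫ x, ∫ y, F x y ∂μ ∂μ) = ∫ y, ∫ x, F x y ∂μ ∂μ :=
    integral_integral_swap hFint
  have hleft : (∫ x, ∫ y, F x y ∂μ ∂μ) = ∫ x in Ioc (0:ℝ) 1, g x * ∫ y in Ioc (0:ℝ) x, f y := by
    apply MeasureTheory.integral_congr_ae
    filter_upwards [ae_restrict_mem measurableSet_Ioc] with x hx
    have h1 : (fun y => F x y) = (Iic x).indicator (fun y => g x * f y) := by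
      funext y; simp [hFdef, Set.indicator_apply, Set.mem_Iic]
    rw [hμ, h1, setIntegral_indicator measurableSet_Iic, Set.Ioc_inter_Iic,
      min_eq_right hx.2, MeasureTheory.integral_const_mul]
  have hright : (∫ y, ∫ x, F x y ∂μ ∂μ) = ∫ y in Ioc (0:ℝ) 1, f y * ∫ x in Ioc y 1, g x := by
    apply MeasureTheory.integral_congr_ae
    filter_upwards [ae_restrict_mem measurableSet_Ioc] with y hy
    have h1 : (fun x => F x y) = (Ici y).indicator (fun x => g x * f y) := by
      funext x; simp [hFdef, Set.indicator_apply, Set.mem_Ici]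
    have h2 : Ioc (0:ℝ) 1 ∩ Ici y = Icc y 1 := by
      ext z
      simp only [Set.mem_inter_iff, Set.mem_Ioc, Set.mem_Ici, Set.mem_Icc]
      constructor
      · rintro ⟨⟨_, h2⟩, h3⟩; exact ⟨h3, h2⟩
      · rintro ⟨h1, h2⟩; exact ⟨⟨lt_of_lt_of_le hy.1 h1, h2⟩, h1⟩
    rw [hμ, h1, setIntegral_indicator measurableSet_Ici, h2,
      setIntegral_congr_set (Ioc_ae_eq_Icc (μ := volume)).symm, MeasureTheory.integral_mul_const, mul_comm]
  rw [← hleft, hswap, hright]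

/-- Interval-integral form of the triangle Fubini theorem. -/
lemma primitive_swap (f g : ℝ → ℝ) (hf : IntegrableOn f (Ioc (0:ℝ) 1))
    (hg : IntegrableOn g (Ioc (0:ℝ) 1)) :
    (∫ x in (0:ℝ)..1, g x * ∫ y in (0:ℝ)..x, f y)
      = ∫ y in (0:ℝ)..1, f y * ∫ x in y..1, g x := by
  rw [integral_of_le zero_le_one, integral_of_le zero_le_one,
    show (∫ x in Ioc (0:ℝ) 1, g x * ∫ y in (0:ℝ)..x, f y)
        = ∫ x in Ioc (0:ℝ) 1, g x * ∫ y in Ioc (0:ℝ) x, f y from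
      setIntegral_congr_fun measurableSet_Ioc (fun x hx => by rw [integral_of_le hx.1.le]),
    swap_Ioc f g hf hg]
  exact setIntegral_congr_fun measurableSet_Ioc (fun y hy => by rw [integral_of_le hy.2])

end Aux

/-- `⟨Au, v⟩ = ⟨u, A*v⟩` for `u` with `MCA(u) = 1/2` and all `v ∈ L²[0,1]`. -/
theorem stmt9 (u v : ℝ → ℝ)
    (hu : MemLp u 2 (volume.restrict (Set.Icc (0:ℝ) 1)))
    (hv : MemLp v 2 (volume.restrict (Set.Icc (0:ℝ) 1)))
    (hint : (∫ x in (0:ℝ)..1, u x) ≠ 0)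
    (hmca : mca u = 1/2) :
    ∫ x in (0:ℝ)..1, Aop u x * v x = ∫ x in (0:ℝ)..1, u x * Astar v x := by
  -- basic integrability
  haveI : Fact (volume (Set.Icc (0:ℝ) 1) < ⊤) := ⟨by simp⟩
  have huI : IntegrableOn u (Set.Icc (0:ℝ) 1) := hu.integrable one_le_two
  have hvI : IntegrableOn v (Set.Icc (0:ℝ) 1) := hv.integrable one_le_two
  have huIoc : IntegrableOn u (Set.Ioc (0:ℝ) 1) := huI.mono_set Set.Ioc_subset_Icc_self
  have hvIoc : IntegrableOn v (Set.Ioc (0:ℝ) 1) := hvI.mono_set Set.Ioc_subset_Icc_self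
  have hui : IntervalIntegrable u volume 0 1 :=
    (intervalIntegrable_iff_integrableOn_Ioc_of_le zero_le_one).mpr huIoc
  have hvi : IntervalIntegrable v volume 0 1 :=
    (intervalIntegrable_iff_integrableOn_Ioc_of_le zero_le_one).mpr hvIoc
  have hus : ∀ x ∈ Set.Icc (0:ℝ) 1, IntervalIntegrable u volume 0 x := fun x hx =>
    hui.mono_set (by
      rw [Set.uIcc_of_le hx.1, Set.uIcc_of_le zero_le_one]
      exact Set.Icc_subset_Icc le_rfl hx.2)
  have hus' : ∀ x ∈ Set.Icc (0:ℝ) 1, IntervalIntegrable u volume x 1 := fun x hx =>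
    hui.mono_set (by
      rw [Set.uIcc_of_le hx.2, Set.uIcc_of_le zero_le_one]
      exact Set.Icc_subset_Icc hx.1 le_rfl)
  have hvs : ∀ x ∈ Set.Icc (0:ℝ) 1, IntervalIntegrable v volume 0 x := fun x hx =>
    hvi.mono_set (by
      rw [Set.uIcc_of_le hx.1, Set.uIcc_of_le zero_le_one]
      exact Set.Icc_subset_Icc le_rfl hx.2)
  have hvs' : ∀ x ∈ Set.Icc (0:ℝ) 1, IntervalIntegrable v volume x 1 := fun x hx =>
    hvi.mono_set (by
      rw [Set.uIcc_of_le hx.2, Set.uIcc_of_le zero_le_one]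
      exact Set.Icc_subset_Icc hx.1 le_rfl)
  -- primitives are continuous
  have hQc : ContinuousOn (fun x => ∫ y in (0:ℝ)..x, u y) (Set.uIcc (0:ℝ) 1) :=
    continuousOn_primitive_interval (by rwa [Set.uIcc_of_le zero_le_one])
  have hPc : ContinuousOn (fun x => ∫ y in (0:ℝ)..x, v y) (Set.uIcc (0:ℝ) 1) :=
    continuousOn_primitive_interval (by rwa [Set.uIcc_of_le zero_le_one])
  -- gradE formulas on [0,1]
  have hgu : ∀ x ∈ Set.Icc (0:ℝ) 1,
      gradE u x = 2 * (∫ y in (0:ℝ)..x, u y) - ∫ y in (0:ℝ)..1, u y := by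
    intro x hx
    have h := integral_add_adjacent_intervals (hus x hx) (hus' x hx)
    simp only [gradE]
    linarith
  have hgv : ∀ x ∈ Set.Icc (0:ℝ) 1,
      gradE v x = 2 * (∫ y in (0:ℝ)..x, v y) - ∫ y in (0:ℝ)..1, v y := by
    intro x hx
    have h := integral_add_adjacent_intervals (hvs x hx) (hvs' x hx)
    simp only [gradE]
    linarith
  have hguc : ContinuousOn (gradE u) (Set.uIcc (0:ℝ) 1) := by
    apply ContinuousOn.congr ((continuousOn_const.mul hQc).sub continuousOn_const)
    intro x hx
    exact hgu x (by rwa [Set.uIcc_of_le zero_le_one] at hx)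
  have hgvc : ContinuousOn (gradE v) (Set.uIcc (0:ℝ) 1) := by
    apply ContinuousOn.congr ((continuousOn_const.mul hPc).sub continuousOn_const)
    intro x hx
    exact hgv x (by rwa [Set.uIcc_of_le zero_le_one] at hx)
  -- product integrability
  have h_guv : IntervalIntegrable (fun x => gradE u x * v x) volume 0 1 :=
    hvi.continuousOn_mul hguc
  have h_ugv : IntervalIntegrable (fun x => u x * gradE v x) volume 0 1 :=
    hui.mul_continuousOn hgvc
  have h_Qv : IntervalIntegrable (fun x => (∫ y in (0:ℝ)..x, u y) * v x) volume 0 1 :=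
    hvi.continuousOn_mul hQc
  have h_uP : IntervalIntegrable (fun x => u x * ∫ y in (0:ℝ)..x, v y) volume 0 1 :=
    hui.mul_continuousOn hPc
  have hc12 : ContinuousOn (fun x : ℝ => x - 1/2) (Set.uIcc (0:ℝ) 1) :=
    (continuous_id.sub continuous_const).continuousOn
  have hpv : IntervalIntegrable (fun x => (x - 1/2) * v x) volume 0 1 :=
    hvi.continuousOn_mul hc12
  have hqu : IntervalIntegrable (fun x => (x^2 - x) * u x) volume 0 1 :=
    hui.continuousOn_mul ((continuous_pow 2 |>.sub continuous_id).continuousOn)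
  have h12Q : IntervalIntegrable (fun y => (y - 1/2) * ∫ t in (0:ℝ)..y, u t) volume 0 1 :=
    (hc12.mul hQc).intervalIntegrable
  have hxu_int : IntervalIntegrable (fun x => x * u x) volume 0 1 :=
    hui.continuousOn_mul continuousOn_id
  -- the constraint `wfun u = 0`
  have hw : wfun u = 0 := by
    unfold mca at hmca
    rw [div_eq_iff hint] at hmca
    unfold wfun
    calc (∫ x in (0:ℝ)..1, (x - 1/2) * u x)
        = ∫ x in (0:ℝ)..1, (x * u x - (1/2) * u x) :=
          intervalIntegral.integral_congr (fun x _ => by ring)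
      _ = (∫ x in (0:ℝ)..1, x * u x) - (1/2) * ∫ x in (0:ℝ)..1, u x := by
          rw [intervalIntegral.integral_sub hxu_int (hui.const_mul _),
            intervalIntegral.integral_const_mul]
      _ = 0 := by rw [hmca]; ring
  have hheav : heav (wfun u) = 1 := by rw [hw]; simp [heav]
  -- e1 : swap identity for ⟨Q, v⟩
  have e1 : (∫ x in (0:ℝ)..1, (∫ y in (0:ℝ)..x, u y) * v x)
      = (∫ y in (0:ℝ)..1, v y) * (∫ y in (0:ℝ)..1, u y)
        - ∫ x in (0:ℝ)..1, u x * ∫ y in (0:ℝ)..x, v y := by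
    calc (∫ x in (0:ℝ)..1, (∫ y in (0:ℝ)..x, u y) * v x)
        = ∫ x in (0:ℝ)..1, v x * ∫ y in (0:ℝ)..x, u y :=
          intervalIntegral.integral_congr (fun x _ => mul_comm _ _)
      _ = ∫ y in (0:ℝ)..1, u y * ∫ x in y..1, v x := primitive_swap u v huIoc hvIoc
      _ = ∫ y in (0:ℝ)..1, ((∫ t in (0:ℝ)..1, v t) * u y - u y * ∫ t in (0:ℝ)..y, v t) := by
          apply intervalIntegral.integral_congr
          intro y hy
          dsimp only
          rw [Set.uIcc_of_le zero_le_one] at hy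
          have h := integral_add_adjacent_intervals (hvs y hy) (hvs' y hy)
          have h2 : (∫ x in y..1, v x) = (∫ t in (0:ℝ)..1, v t) - ∫ t in (0:ℝ)..y, v t := by
            linarith
          rw [h2]; ring
      _ = (∫ y in (0:ℝ)..1, v y) * (∫ y in (0:ℝ)..1, u y)
            - ∫ x in (0:ℝ)..1, u x * ∫ y in (0:ℝ)..x, v y := by
          rw [intervalIntegral.integral_sub (hui.const_mul _) h_uP,
            intervalIntegral.integral_const_mul]
  -- e2 : expand ∫ gradE u · v
  have e2 : (∫ x in (0:ℝ)..1, gradE u x * v x)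
      = 2 * (∫ x in (0:ℝ)..1, (∫ y in (0:ℝ)..x, u y) * v x)
        - (∫ y in (0:ℝ)..1, u y) * (∫ y in (0:ℝ)..1, v y) := by
    calc (∫ x in (0:ℝ)..1, gradE u x * v x)
        = ∫ x in (0:ℝ)..1,
            (2 * ((∫ y in (0:ℝ)..x, u y) * v x) - (∫ y in (0:ℝ)..1, u y) * v x) := by
          apply intervalIntegral.integral_congr
          intro x hx
          dsimp only
          rw [Set.uIcc_of_le zero_le_one] at hx
          rw [hgu x hx]; ring
      _ = 2 * (∫ x in (0:ℝ)..1, (∫ y in (0:ℝ)..x, u y) * v x)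
            - (∫ y in (0:ℝ)..1, u y) * (∫ y in (0:ℝ)..1, v y) := by
          rw [intervalIntegral.integral_sub (h_Qv.const_mul _) (hvi.const_mul _),
            intervalIntegral.integral_const_mul, intervalIntegral.integral_const_mul]
  -- e3 : expand ∫ u · gradE v
  have e3 : (∫ x in (0:ℝ)..1, u x * gradE v x)
      = 2 * (∫ x in (0:ℝ)..1, u x * ∫ y in (0:ℝ)..x, v y)
        - (∫ y in (0:ℝ)..1, u y) * (∫ y in (0:ℝ)..1, v y) := by
    calc (∫ x in (0:ℝ)..1, u x * gradE v x)
        = ∫ x in (0:ℝ)..1,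
            (2 * (u x * ∫ y in (0:ℝ)..x, v y) - (∫ y in (0:ℝ)..1, v y) * u x) := by
          apply intervalIntegral.integral_congr
          intro x hx
          dsimp only
          rw [Set.uIcc_of_le zero_le_one] at hx
          rw [hgv x hx]; ring
      _ = 2 * (∫ x in (0:ℝ)..1, u x * ∫ y in (0:ℝ)..x, v y)
            - (∫ y in (0:ℝ)..1, u y) * (∫ y in (0:ℝ)..1, v y) := by
          rw [intervalIntegral.integral_sub (h_uP.const_mul _) (hui.const_mul _),
            intervalIntegral.integral_const_mul, intervalIntegral.integral_const_mul]
          ring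
  -- polynomial integrals
  have hp1 : IntervalIntegrable (fun y : ℝ => y - 1/2) volume 0 1 :=
    (continuous_id.sub continuous_const).intervalIntegrable _ _
  have hp2 : ∀ y : ℝ, (∫ x in y..(1:ℝ), (x - 1/2)) = (y - y^2)/2 := by
    intro y
    rw [intervalIntegral.integral_sub (continuous_id'.intervalIntegrable _ _)
      intervalIntegrable_const, integral_id, intervalIntegral.integral_const, smul_eq_mul]
    ring
  have hp0 : (∫ y in (0:ℝ)..1, (y - 1/2)) = 0 := by
    rw [intervalIntegral.integral_sub (continuous_id'.intervalIntegrable _ _)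
      intervalIntegrable_const, integral_id, intervalIntegral.integral_const, smul_eq_mul]
    norm_num
  -- e4 : the constant c
  have e4 : (∫ y in (0:ℝ)..1, (y - 1/2) * gradE u y)
      = -∫ x in (0:ℝ)..1, (x^2 - x) * u x := by
    have hswap : (∫ x in (0:ℝ)..1, (x - 1/2) * ∫ y in (0:ℝ)..x, u y)
        = ∫ y in (0:ℝ)..1, u y * ∫ x in y..1, (x - 1/2) :=
      primitive_swap u (fun y => y - 1/2) huIoc
        ((intervalIntegrable_iff_integrableOn_Ioc_of_le zero_le_one).mp hp1)
    calc (∫ y in (0:ℝ)..1, (y - 1/2) * gradE u y)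
        = ∫ y in (0:ℝ)..1,
            (2 * ((y - 1/2) * ∫ t in (0:ℝ)..y, u t) - (∫ t in (0:ℝ)..1, u t) * (y - 1/2)) := by
          apply intervalIntegral.integral_congr
          intro y hy
          dsimp only
          rw [Set.uIcc_of_le zero_le_one] at hy
          rw [hgu y hy]; ring
      _ = 2 * (∫ y in (0:ℝ)..1, (y - 1/2) * ∫ t in (0:ℝ)..y, u t)
            - (∫ t in (0:ℝ)..1, u t) * ∫ y in (0:ℝ)..1, (y - 1/2) := by
          rw [intervalIntegral.integral_sub (h12Q.const_mul _) (hp1.const_mul _),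
            intervalIntegral.integral_const_mul, intervalIntegral.integral_const_mul]
      _ = 2 * (∫ y in (0:ℝ)..1, u y * ∫ x in y..1, (x - 1/2)) := by
          rw [hswap, hp0]; ring
      _ = 2 * ∫ y in (0:ℝ)..1, u y * ((y - y^2)/2) := by
          congr 1
          exact intervalIntegral.integral_congr (fun y _ => by rw [hp2 y])
      _ = ∫ y in (0:ℝ)..1, 2 * (u y * ((y - y^2)/2)) := by
          rw [intervalIntegral.integral_const_mul]
      _ = -∫ x in (0:ℝ)..1, (x^2 - x) * u x := by
          rw [← intervalIntegral.integral_neg]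
          exact intervalIntegral.integral_congr (fun y _ => by ring)
  -- assemble the left-hand side
  have hL : (∫ x in (0:ℝ)..1, Aop u x * v x)
      = (∫ x in (0:ℝ)..1, gradE u x * v x)
        - (12 * ∫ y in (0:ℝ)..1, (y - 1/2) * gradE u y) * ∫ x in (0:ℝ)..1, (x - 1/2) * v x := by
    calc (∫ x in (0:ℝ)..1, Aop u x * v x)
        = ∫ x in (0:ℝ)..1, (gradE u x * v x
            - (12 * ∫ y in (0:ℝ)..1, (y - 1/2) * gradE u y) * ((x - 1/2) * v x)) := by
          apply intervalIntegral.integral_congr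
          intro x _
          simp only [Aop, hheav]
          ring
      _ = (∫ x in (0:ℝ)..1, gradE u x * v x)
            - (12 * ∫ y in (0:ℝ)..1, (y - 1/2) * gradE u y) * ∫ x in (0:ℝ)..1, (x - 1/2) * v x := by
          rw [intervalIntegral.integral_sub h_guv (hpv.const_mul _),
            intervalIntegral.integral_const_mul]
  -- assemble the right-hand side
  have hR : (∫ x in (0:ℝ)..1, u x * Astar v x)
      = -(∫ x in (0:ℝ)..1, u x * gradE v x)
        + (12 * ∫ y in (0:ℝ)..1, (y - 1/2) * v y) * ∫ x in (0:ℝ)..1, (x^2 - x) * u x := by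
    calc (∫ x in (0:ℝ)..1, u x * Astar v x)
        = ∫ x in (0:ℝ)..1, (-(u x * gradE v x)
            + (12 * ∫ y in (0:ℝ)..1, (y - 1/2) * v y) * ((x^2 - x) * u x)) := by
          apply intervalIntegral.integral_congr
          intro x _
          simp only [Astar]
          ring
      _ = -(∫ x in (0:ℝ)..1, u x * gradE v x)
            + (12 * ∫ y in (0:ℝ)..1, (y - 1/2) * v y) * ∫ x in (0:ℝ)..1, (x^2 - x) * u x := by
          have h_ugvneg : IntervalIntegrable (fun x => -(u x * gradE v x)) volume 0 1 :=
            h_ugv.neg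
          rw [intervalIntegral.integral_add h_ugvneg (hqu.const_mul _),
            intervalIntegral.integral_neg, intervalIntegral.integral_const_mul]
  rw [hL, hR, e4]
  have hd : (∫ x in (0:ℝ)..1, (x - 1/2) * v x) = ∫ y in (0:ℝ)..1, (y - 1/2) * v y := rfl
  rw [hd]
  linear_combination e2 + 2 * e1 + e3
end

section
/- Let α : [0,∞) → L²[0,1] solve the constrained adaptive dynamics α' = Aα with initial data f₀ satisfying MCA(f₀) = 1/2 and ∫₀¹ f₀ ≠ 0. Then ‖α(t)‖_{L²} is constant in t. -/
open MeasureTheory intervalIntegral ENNReal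

section helpers

local notation "μ01" => volume.restrict (Set.Icc (0:ℝ) 1)

private lemma isFiniteMeasure_mu01 : IsFiniteMeasure μ01 :=
  ⟨by rw [Measure.restrict_apply_univ]; simp [Real.volume_Icc]⟩

/-- interval integral over `0..1` equals the integral w.r.t. the restricted measure -/
private lemma interval_eq_mu (f : ℝ → ℝ) :
    (∫ x in (0:ℝ)..1, f x) = ∫ x, f x ∂μ01 := by
  rw [intervalIntegral.integral_of_le zero_le_one, ← integral_Icc_eq_integral_Ioc]

private lemma primitive_eq {f : ℝ → ℝ} (hf : IntegrableOn f (Set.Icc (0:ℝ) 1) volume)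
    {x : ℝ} (hx : x ∈ Set.Icc (0:ℝ) 1) :
    (∫ y in (0:ℝ)..x, f y) = ∫ y in Set.Iic x, f y ∂μ01 := by
  rw [intervalIntegral.integral_of_le hx.1, Measure.restrict_restrict measurableSet_Iic]
  have h : Set.Iic x ∩ Set.Icc 0 1 = Set.Icc 0 x := by
    ext y
    simp only [Set.mem_inter_iff, Set.mem_Iic, Set.mem_Icc]
    exact ⟨fun ⟨h1, h2, _⟩ => ⟨h2, h1⟩, fun ⟨h1, h2⟩ => ⟨h2, h1, le_trans h2 hx.2⟩⟩
  rw [h, ← integral_Icc_eq_integral_Ioc]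

private lemma gradE_rep {f : ℝ → ℝ} (hf : IntegrableOn f (Set.Icc (0:ℝ) 1) volume)
    {x : ℝ} (hx : x ∈ Set.Icc (0:ℝ) 1) :
    gradE f x = 2 * (∫ y in (0:ℝ)..x, f y) - ∫ y, f y ∂μ01 := by
  have hT : (∫ y, f y ∂μ01) = ∫ y in (0:ℝ)..1, f y := (interval_eq_mu f).symm
  have h1 : IntervalIntegrable f volume 0 x := by
    apply IntegrableOn.intervalIntegrable
    apply hf.mono_set
    rw [Set.uIcc_of_le hx.1]
    exact Set.Icc_subset_Icc le_rfl hx.2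
  have h2 : IntervalIntegrable f volume x 1 := by
    apply IntegrableOn.intervalIntegrable
    apply hf.mono_set
    rw [Set.uIcc_of_le hx.2]
    exact Set.Icc_subset_Icc hx.1 le_rfl
  have hadd := intervalIntegral.integral_add_adjacent_intervals h1 h2
  unfold gradE
  rw [hT]
  linarith

private lemma primitive_contOn {f : ℝ → ℝ} (hf : IntegrableOn f (Set.Icc (0:ℝ) 1) volume) :
    ContinuousOn (fun x => ∫ y in (0:ℝ)..x, f y) (Set.Icc (0:ℝ) 1) := by
  have h := continuousOn_primitive_interval (a := (0:ℝ)) (b := 1) (μ := volume) (f := f)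
    (by rwa [Set.uIcc_of_le zero_le_one])
  rwa [Set.uIcc_of_le zero_le_one] at h

private lemma gradE_contOn {f : ℝ → ℝ} (hf : IntegrableOn f (Set.Icc (0:ℝ) 1) volume) :
    ContinuousOn (gradE f) (Set.Icc (0:ℝ) 1) := by
  exact ((continuousOn_const.mul (primitive_contOn hf)).sub continuousOn_const).congr
    (fun x hx => gradE_rep hf hx)

/-- The key Fubini identity: `∫ f ⋅ ∇E f = 0`. -/
private lemma integral_self_gradE {f : ℝ → ℝ}
    (hf : IntegrableOn f (Set.Icc (0:ℝ) 1) volume) :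
    ∫ x, f x * gradE f x ∂μ01 = 0 := by
  haveI : IsFiniteMeasure μ01 := isFiniteMeasure_mu01
  have hfi : Integrable f μ01 := hf
  set T := ∫ y, f y ∂μ01 with hT
  set F : ℝ → ℝ := fun x => ∫ y in Set.Iic x, f y ∂μ01 with hFdef
  set k : ℝ × ℝ → ℝ :=
    Set.indicator {p : ℝ × ℝ | p.2 ≤ p.1} (fun p => f p.1 * f p.2) with hkdef
  have hks : MeasurableSet {p : ℝ × ℝ | p.2 ≤ p.1} :=
    measurableSet_le measurable_snd measurable_fst
  have hkint : Integrable k (Measure.prod μ01 μ01) := (hfi.mul_prod hfi).indicator hks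
  have hsec : ∀ x : ℝ, (∫ y, k (x, y) ∂μ01) = f x * F x := by
    intro x
    have h1 : (fun y => k (x, y)) = Set.indicator (Set.Iic x) (fun y => f x * f y) := by
      ext y
      by_cases h : y ≤ x <;> simp [hkdef, Set.indicator, h]
    rw [h1, MeasureTheory.integral_indicator measurableSet_Iic, MeasureTheory.integral_const_mul]
  have hK : ∫ x, f x * F x ∂μ01 = ∫ z, k z ∂(Measure.prod μ01 μ01) := by
    have h2 : ∫ x, f x * F x ∂μ01 = ∫ x, ∫ y, k (x, y) ∂μ01 ∂μ01 :=
      integral_congr_ae (Filter.Eventually.of_forall fun x => (hsec x).symm)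
    rw [h2]
    exact integral_integral (f := fun x y => k (x, y)) hkint
  have hswap : ∫ z, k z ∂(Measure.prod μ01 μ01) = ∫ z, k z.swap ∂(Measure.prod μ01 μ01) :=
    (integral_prod_swap k).symm
  have hD : MeasurableSet {p : ℝ × ℝ | p.1 = p.2} :=
    measurableSet_eq_fun measurable_fst measurable_snd
  have hD0 : (Measure.prod μ01 μ01) {p : ℝ × ℝ | p.1 = p.2} = 0 := by
    rw [Measure.prod_apply hD]
    have h1 : ∀ x : ℝ, (Prod.mk x ⁻¹' {p : ℝ × ℝ | p.1 = p.2}) = {x} := by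
      intro x; ext y; simp [eq_comm]
    simp [h1]
  have hdiag : ∫ z, Set.indicator {p : ℝ × ℝ | p.1 = p.2} (fun p => f p.1 * f p.2) z
      ∂(Measure.prod μ01 μ01) = 0 := by
    rw [MeasureTheory.integral_indicator hD, Measure.restrict_eq_zero.mpr hD0,
      integral_zero_measure]
  have hsum : ∀ z : ℝ × ℝ, k z + k z.swap =
      f z.1 * f z.2 + Set.indicator {p : ℝ × ℝ | p.1 = p.2} (fun p => f p.1 * f p.2) z := by
    rintro ⟨x, y⟩
    rcases lt_trichotomy x y with h | h | h
    · simp [hkdef, Set.indicator_apply, not_le.mpr h, h.le, h.ne, mul_comm]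
    · subst h
      simp [hkdef, Set.indicator_apply]
    · simp [hkdef, Set.indicator_apply, not_le.mpr h, h.le, h.ne', mul_comm]
  have h2K : (∫ z, k z ∂(Measure.prod μ01 μ01)) + (∫ z, k z ∂(Measure.prod μ01 μ01)) = T * T := by
    have hkswap : Integrable (fun z : ℝ × ℝ => k z.swap) (Measure.prod μ01 μ01) := hkint.swap
    nth_rewrite 2 [hswap]
    rw [← integral_add hkint hkswap]
    have e1 : ∫ z, (k z + k z.swap) ∂(Measure.prod μ01 μ01) =
        ∫ z, (f z.1 * f z.2 +
          Set.indicator {p : ℝ × ℝ | p.1 = p.2} (fun p => f p.1 * f p.2) z) ∂(Measure.prod μ01 μ01) :=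
      integral_congr_ae (Filter.Eventually.of_forall hsum)
    rw [e1, integral_add (hfi.mul_prod hfi) ((hfi.mul_prod hfi).indicator hD),
      integral_prod_mul, hdiag, add_zero]
  -- boundedness of the primitive
  set P : ℝ → ℝ := fun x => ∫ y in (0:ℝ)..x, f y with hPdef
  have hPc : ContinuousOn P (Set.Icc (0:ℝ) 1) := primitive_contOn hf
  obtain ⟨C, hC⟩ := isCompact_Icc.exists_bound_of_continuousOn hPc
  have hPm : AEStronglyMeasurable P μ01 := hPc.aestronglyMeasurable measurableSet_Icc
  have hxmem : ∀ᵐ x ∂μ01, x ∈ Set.Icc (0:ℝ) 1 := ae_restrict_mem measurableSet_Icc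
  have hfP : Integrable (fun x => P x * f x) μ01 :=
    hfi.bdd_mul hPm (by filter_upwards [hxmem] with x hx; exact hC x hx)
  have step1 : ∫ x, f x * gradE f x ∂μ01 = 2 * (∫ x, P x * f x ∂μ01) - T * T := by
    have e : ∫ x, f x * gradE f x ∂μ01 = ∫ x, (2 * (P x * f x) - T * f x) ∂μ01 := by
      refine integral_congr_ae ?_
      filter_upwards [hxmem] with x hx
      rw [gradE_rep hf hx]
      ring
    rw [e, integral_sub (hfP.const_mul 2) (hfi.const_mul T), MeasureTheory.integral_const_mul,
      MeasureTheory.integral_const_mul, ← hT]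
  have step2 : ∫ x, P x * f x ∂μ01 = ∫ z, k z ∂(Measure.prod μ01 μ01) := by
    rw [← hK]
    refine integral_congr_ae ?_
    filter_upwards [hxmem] with x hx
    rw [show P x = F x from primitive_eq hf hx]
    ring
  rw [step1, step2]
  linarith

private lemma quad_integral : ∫ x, (x - 1/2)^2 ∂μ01 = 1/12 := by
  rw [← interval_eq_mu]
  have h := intervalIntegral.integral_comp_sub_right (a := (0:ℝ)) (b := 1)
    (fun x => x ^ 2) (1/2)
  norm_num [integral_pow] at h
  convert h using 2 <;> norm_num

private lemma pair_integral {f : ℝ → ℝ} (hf : IntegrableOn f (Set.Icc (0:ℝ) 1) volume) :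
    ∫ x, (x - 1/2) * Aop f x ∂μ01 =
      (∫ y in (0:ℝ)..1, (y - 1/2) * gradE f y) * (1 - heav (wfun f)) := by
  haveI : IsFiniteMeasure μ01 := isFiniteMeasure_mu01
  set c := ∫ y in (0:ℝ)..1, (y - 1/2) * gradE f y with hc
  set H := heav (wfun f) with hH
  have hint1 : Integrable (fun x => (x - 1/2) * gradE f x) μ01 := by
    have : ContinuousOn (fun x : ℝ => (x - 1/2) * gradE f x) (Set.Icc (0:ℝ) 1) :=
      ((continuous_id.sub continuous_const).continuousOn).mul (gradE_contOn hf)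
    exact this.integrableOn_Icc
  have hint2 : Integrable (fun x : ℝ => (x - 1/2)^2) μ01 :=
    (((continuous_id.sub continuous_const).pow 2).continuousOn).integrableOn_Icc
  have hdec : ∀ x : ℝ, (x - 1/2) * Aop f x =
      (x - 1/2) * gradE f x - (12 * H * c) * ((x - 1/2)^2) := by
    intro x
    simp only [Aop, ← hc, ← hH]
    ring
  simp only [hdec]
  rw [integral_sub hint1 (hint2.const_mul _), MeasureTheory.integral_const_mul, quad_integral,
    show (∫ x, (x - 1/2) * gradE f x ∂μ01) = c from (interval_eq_mu _).symm]
  ring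

private lemma self_integral {f : ℝ → ℝ} (hf : IntegrableOn f (Set.Icc (0:ℝ) 1) volume) :
    ∫ x, f x * Aop f x ∂μ01 =
      -(12 * heav (wfun f) * (∫ y in (0:ℝ)..1, (y - 1/2) * gradE f y) * wfun f) := by
  haveI : IsFiniteMeasure μ01 := isFiniteMeasure_mu01
  have hfi : Integrable f μ01 := hf
  set c := ∫ y in (0:ℝ)..1, (y - 1/2) * gradE f y with hc
  set H := heav (wfun f) with hH
  have hxmem : ∀ᵐ x ∂μ01, x ∈ Set.Icc (0:ℝ) 1 := ae_restrict_mem measurableSet_Icc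
  obtain ⟨C, hC⟩ := isCompact_Icc.exists_bound_of_continuousOn (gradE_contOn hf)
  have hint1 : Integrable (fun x => gradE f x * f x) μ01 :=
    hfi.bdd_mul ((gradE_contOn hf).aestronglyMeasurable measurableSet_Icc)
      (by filter_upwards [hxmem] with x hx; exact hC x hx)
  have hint2 : Integrable (fun x => (x - 1/2) * f x) μ01 :=
    hfi.bdd_mul ((continuous_id.sub continuous_const).aestronglyMeasurable) (c := 1)
      (by filter_upwards [hxmem] with x hx
          rw [Real.norm_eq_abs, abs_le]
          constructor <;> [linarith [hx.1]; linarith [hx.2]])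
  have hdec : ∀ x : ℝ, f x * Aop f x =
      gradE f x * f x - (12 * H * c) * ((x - 1/2) * f x) := by
    intro x
    simp only [Aop, ← hc, ← hH]
    ring
  simp only [hdec]
  rw [integral_sub hint1 (hint2.const_mul _), MeasureTheory.integral_const_mul,
    show (∫ x, (x - 1/2) * f x ∂μ01) = wfun f from (interval_eq_mu _).symm]
  have h0 : ∫ x, gradE f x * f x ∂μ01 = 0 := by
    rw [show (fun x => gradE f x * f x) = fun x => f x * gradE f x from
      funext fun x => mul_comm _ _]
    exact integral_self_gradE hf
  rw [h0]
  ring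

/-- ODE comparison: if `u 0 = 0` and `u` has zero derivative whenever `u ≥ 0`,
then `u ≤ 0` on `[0, ∞)`. -/
private lemma ode_nonpos {u : ℝ → ℝ} (h0 : u 0 = 0)
    (hdiff : ∀ t, 0 ≤ t → DifferentiableAt ℝ u t)
    (hstop : ∀ t, 0 ≤ t → 0 ≤ u t → HasDerivAt u 0 t) :
    ∀ t, 0 ≤ t → u t ≤ 0 := by
  intro t₀ ht₀
  by_contra hpos
  push_neg at hpos
  have hcont : ContinuousOn u (Set.Icc 0 t₀) := fun s hs =>
    ((hdiff s hs.1).continuousAt).continuousWithinAt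
  set S : Set ℝ := Set.Icc 0 t₀ ∩ u ⁻¹' Set.Iic 0 with hSdef
  have hS0 : (0:ℝ) ∈ S := ⟨⟨le_rfl, ht₀⟩, by simp [h0]⟩
  have hSb : BddAbove S := (bddAbove_Icc).mono Set.inter_subset_left
  have hScl : IsClosed S :=
    hcont.preimage_isClosed_of_isClosed isClosed_Icc isClosed_Iic
  set s := sSup S with hsdef
  have hsmem : s ∈ S := hScl.csSup_mem ⟨0, hS0⟩ hSb
  have hs0 : 0 ≤ s := le_csSup hSb hS0
  have hsle : s ≤ t₀ := hsmem.1.2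
  have hsneg : u s ≤ 0 := hsmem.2
  have hslt : s < t₀ := by
    rcases lt_or_eq_of_le hsle with h | h
    · exact h
    · exfalso; rw [h] at hsneg; exact absurd hpos (not_lt.mpr hsneg)
  have hposIoc : ∀ r ∈ Set.Ioc s t₀, 0 < u r := by
    intro r hr
    by_contra h
    push_neg at h
    have hrS : r ∈ S := ⟨⟨le_trans hs0 hr.1.le, hr.2⟩, h⟩
    exact absurd (le_csSup hSb hrS) (not_le.mpr hr.1)
  have hconstr : ∀ r ∈ Set.Ioc s t₀, u t₀ = u r := by
    intro r hr
    have hsub : Set.Icc r t₀ ⊆ Set.Icc 0 t₀ :=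
      Set.Icc_subset_Icc (le_trans hs0 hr.1.le) le_rfl
    have h := constant_of_has_deriv_right_zero (f := u) (a := r) (b := t₀)
      (hcont.mono hsub)
      (fun x hx => (hstop x (le_trans (le_trans hs0 hr.1.le) hx.1)
        (le_of_lt (hposIoc x ⟨lt_of_lt_of_le hr.1 hx.1, hx.2.le⟩))).hasDerivWithinAt)
    exact h t₀ ⟨hr.2, le_rfl⟩
  have hne : (nhdsWithin s (Set.Ioc s t₀)).NeBot := by
    rw [nhdsWithin_Ioc_eq_nhdsGT hslt]
    exact nhdsGT_neBot s
  have htend : Filter.Tendsto u (nhdsWithin s (Set.Ioc s t₀)) (nhds (u s)) :=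
    (hcont s hsmem.1).mono (fun r hr => ⟨le_trans hs0 hr.1.le, hr.2⟩)
  have htend2 : Filter.Tendsto u (nhdsWithin s (Set.Ioc s t₀)) (nhds (u t₀)) := by
    refine Filter.Tendsto.congr' ?_ tendsto_const_nhds
    filter_upwards [self_mem_nhdsWithin] with r hr
    exact hconstr r hr
  have heq : u s = u t₀ := tendsto_nhds_unique htend htend2
  exact absurd hsneg (not_le.mpr (heq ▸ hpos))

end helpers

/-- A solution of the constrained adaptive dynamics `α' = Aα` in `L²[0,1]`
starting from data with `MCA = 1/2` and nonzero total mass has constant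
`L²` norm. -/
theorem stmt11
    (α : ℝ → Lp ℝ 2 (volume.restrict (Set.Icc (0:ℝ) 1)))
    (hsol : ∀ t : ℝ, 0 ≤ t →
        ∃ g : Lp ℝ 2 (volume.restrict (Set.Icc (0:ℝ) 1)),
          (g : ℝ → ℝ) =ᵐ[volume.restrict (Set.Icc (0:ℝ) 1)] Aop (α t) ∧
          HasDerivAt α g t)
    (hmca : mca (α 0) = 1/2)
    (hint : (∫ x in (0:ℝ)..1, (α 0 : ℝ → ℝ) x) ≠ 0) :
    ∀ t : ℝ, 0 ≤ t → ‖α t‖ = ‖α 0‖ := by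
  haveI : IsFiniteMeasure (volume.restrict (Set.Icc (0:ℝ) 1)) := isFiniteMeasure_mu01
  have hxmem : ∀ᵐ x ∂(volume.restrict (Set.Icc (0:ℝ) 1)), x ∈ Set.Icc (0:ℝ) 1 :=
    ae_restrict_mem measurableSet_Icc
  -- basic integrability of elements of L²
  have hInt : ∀ f : Lp ℝ 2 (volume.restrict (Set.Icc (0:ℝ) 1)),
      Integrable (f : ℝ → ℝ) (volume.restrict (Set.Icc (0:ℝ) 1)) :=
    fun f => (Lp.memLp f).integrable one_le_two
  -- the inner product as an integral
  have hinner : ∀ f g : Lp ℝ 2 (volume.restrict (Set.Icc (0:ℝ) 1)),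
      (inner ℝ f g : ℝ) = ∫ x, (f : ℝ → ℝ) x * (g : ℝ → ℝ) x
        ∂(volume.restrict (Set.Icc (0:ℝ) 1)) := by
    intro f g
    rw [MeasureTheory.L2.inner_def]
    simp [RCLike.inner_apply, mul_comm]
  -- the weight function as an L² element
  have hφm : MemLp (fun x : ℝ => x - 1/2) 2 (volume.restrict (Set.Icc (0:ℝ) 1)) :=
    MemLp.of_bound ((continuous_id.sub continuous_const).aestronglyMeasurable) 1
      (by filter_upwards [hxmem] with x hx
          rw [Real.norm_eq_abs, abs_le]
          constructor <;> [linarith [hx.1]; linarith [hx.2]])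
  set φ : Lp ℝ 2 (volume.restrict (Set.Icc (0:ℝ) 1)) := hφm.toLp _ with hφdef
  have hφcoe : (φ : ℝ → ℝ) =ᵐ[volume.restrict (Set.Icc (0:ℝ) 1)] fun x => x - 1/2 :=
    hφm.coeFn_toLp
  -- wfun as inner product with φ
  have hwf : ∀ f : Lp ℝ 2 (volume.restrict (Set.Icc (0:ℝ) 1)),
      wfun (f : ℝ → ℝ) = (inner ℝ φ f : ℝ) := by
    intro f
    rw [hinner]
    unfold wfun
    rw [interval_eq_mu]
    refine integral_congr_ae ?_
    filter_upwards [hφcoe] with x hx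
    rw [hx]
  set u : ℝ → ℝ := fun s => (inner ℝ φ (α s) : ℝ) with hudef
  -- derivative facts about u
  have hu_deriv : ∀ s : ℝ, 0 ≤ s → ∃ d : ℝ, HasDerivAt u d s ∧ (0 ≤ u s → d = 0) := by
    intro s hs
    obtain ⟨g, hg, hd⟩ := hsol s hs
    refine ⟨(inner ℝ φ g : ℝ), ?_, ?_⟩
    · exact (innerSL ℝ φ).hasFDerivAt.comp_hasDerivAt s hd
    · intro hus
      have h1 : (inner ℝ φ g : ℝ) =
          (∫ y in (0:ℝ)..1, (y - 1/2) * gradE (α s) y) * (1 - heav (wfun (α s))) := by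
        rw [hinner]
        have e : ∫ x, (φ : ℝ → ℝ) x * (g : ℝ → ℝ) x ∂(volume.restrict (Set.Icc (0:ℝ) 1)) =
            ∫ x, (x - 1/2) * Aop (α s) x ∂(volume.restrict (Set.Icc (0:ℝ) 1)) := by
          refine integral_congr_ae ?_
          filter_upwards [hφcoe, hg] with x h1 h2
          rw [h1, h2]
        rw [e]
        exact pair_integral (hInt (α s))
      have h2 : heav (wfun (α s)) = 1 := by
        unfold heav
        rw [if_pos]
        rw [hwf (α s)]
        exact hus
      rw [h1, h2]
      ring
  -- u 0 = 0
  have hu0 : u 0 = 0 := by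
    have hfint : IntervalIntegrable (fun x => (α 0 : ℝ → ℝ) x) volume 0 1 := by
      apply IntegrableOn.intervalIntegrable
      rw [Set.uIcc_of_le zero_le_one]
      exact hInt (α 0)
    have hxint : IntervalIntegrable (fun x => x * (α 0 : ℝ → ℝ) x) volume 0 1 := by
      apply IntegrableOn.intervalIntegrable
      rw [Set.uIcc_of_le zero_le_one]
      refine (hInt (α 0)).bdd_mul continuous_id.aestronglyMeasurable (c := 1) ?_
      filter_upwards [hxmem] with x hx
      rw [Real.norm_eq_abs, abs_of_nonneg hx.1]
      exact hx.2
    have hsplit : wfun (α 0 : ℝ → ℝ) = (∫ x in (0:ℝ)..1, x * (α 0 : ℝ → ℝ) x) -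
        (1/2) * ∫ x in (0:ℝ)..1, (α 0 : ℝ → ℝ) x := by
      unfold wfun
      simp only [show ∀ x : ℝ, (x - 1/2) * (α 0 : ℝ → ℝ) x
          = x * (α 0 : ℝ → ℝ) x - (1/2) * ((α 0 : ℝ → ℝ) x) from fun x => by ring]
      rw [intervalIntegral.integral_sub hxint (hfint.const_mul (1/2)),
        intervalIntegral.integral_const_mul]
    have hm : ∫ x in (0:ℝ)..1, x * (α 0 : ℝ → ℝ) x
        = (1/2) * ∫ x in (0:ℝ)..1, (α 0 : ℝ → ℝ) x := by
      have h := hmca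
      unfold mca at h
      rw [div_eq_iff hint] at h
      linarith [h]
    have : u 0 = wfun (α 0 : ℝ → ℝ) := (hwf (α 0)).symm
    rw [this, hsplit, hm]
    ring
  -- u stays nonpositive
  have hune : ∀ s, 0 ≤ s → u s ≤ 0 := by
    refine ode_nonpos hu0 ?_ ?_
    · intro s hs
      obtain ⟨d, hd, _⟩ := hu_deriv s hs
      exact hd.differentiableAt
    · intro s hs hus
      obtain ⟨d, hd, hz⟩ := hu_deriv s hs
      rw [← hz hus]
      exact hd
  -- the squared norm has zero derivative
  have hN : ∀ s : ℝ, 0 ≤ s →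
      HasDerivAt (fun r => (inner ℝ (α r) (α r) : ℝ)) 0 s := by
    intro s hs
    obtain ⟨g, hg, hd⟩ := hsol s hs
    have hself : (inner ℝ (α s) g : ℝ) = 0 := by
      rw [hinner]
      have e : ∫ x, (α s : ℝ → ℝ) x * (g : ℝ → ℝ) x ∂(volume.restrict (Set.Icc (0:ℝ) 1)) =
          ∫ x, (α s : ℝ → ℝ) x * Aop (α s) x ∂(volume.restrict (Set.Icc (0:ℝ) 1)) := by
        refine integral_congr_ae ?_
        filter_upwards [hg] with x hx
        rw [hx]
      rw [e, self_integral (hInt (α s))]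
      rcases lt_or_eq_of_le (hune s hs) with h | h
      · have hh : heav (wfun (α s : ℝ → ℝ)) = 0 := by
          unfold heav
          rw [if_neg]
          rw [hwf (α s)]
          exact not_le.mpr h
        rw [hh]
        ring
      · have hh : wfun (α s : ℝ → ℝ) = 0 := by
          rw [hwf (α s)]
          exact h
        rw [hh]
        ring
    have h2 := HasDerivAt.inner (𝕜 := ℝ) hd hd
    have h3 : (inner ℝ (α s) g : ℝ) + (inner ℝ g (α s) : ℝ) = 0 := by
      have hc : (inner ℝ g (α s) : ℝ) = (inner ℝ (α s) g : ℝ) := real_inner_comm (α s) g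
      rw [hc, hself]
      ring
    rwa [h3] at h2
  -- conclude
  intro t ht
  have hconst := constant_of_has_deriv_right_zero
    (f := fun r => (inner ℝ (α r) (α r) : ℝ)) (a := 0) (b := t)
    (fun s hs => ((hN s hs.1).differentiableAt.continuousAt).continuousWithinAt)
    (fun s hs => (hN s hs.1).hasDerivWithinAt)
  have heq : (inner ℝ (α t) (α t) : ℝ) = (inner ℝ (α 0) (α 0) : ℝ) := hconst t ⟨ht, le_rfl⟩
  have h2 : ‖α t‖ ^ 2 = ‖α 0‖ ^ 2 := by
    rw [← real_inner_self_eq_norm_sq, ← real_inner_self_eq_norm_sq]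
    exact heq
  rw [← Real.sqrt_sq (norm_nonneg (α t)), ← Real.sqrt_sq (norm_nonneg (α 0)), h2]
end

section
/- If u is a positive constant function on [0,1] and g ∈ L¹[0,1] with ∫₀¹ g ≠ 0, then E[u, g] = 2u·(1/2 − MCA(g))·∫₀¹ g(x) dx. In particular, if MCA(g) ≤ 1/2 and ∫₀¹ g > 0, then E[u,g] ≥ 0, so no strategy with MCA ≤ 1/2 defeats a constant strategy. -/
open MeasureTheory intervalIntegral

/-- The payoff of the function-valued team game. -/
noncomputable def payoff (f g : ℝ → ℝ) : ℝ :=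
  ∫ x in (0:ℝ)..1, f x * ((∫ y in (0:ℝ)..x, g y) - ∫ y in x..(1:ℝ), g y)

open Set in
/-- Fubini over the triangle: `∫₀¹ ∫₀ˣ g = ∫₀¹ (1-y) g(y) dy`. -/
lemma primitive_integral (g : ℝ → ℝ) (hg : IntegrableOn g (Set.Icc (0:ℝ) 1)) :
    (∫ x in (0:ℝ)..1, ∫ y in (0:ℝ)..x, g y) = ∫ y in (0:ℝ)..1, (1 - y) * g y := by
  have hg' : IntegrableOn g (Ioc (0:ℝ) 1) := hg.mono_set Ioc_subset_Icc_self
  set μ : Measure ℝ := volume.restrict (Ioc (0:ℝ) 1) with hμ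
  have hμfin : IsFiniteMeasure μ := by
    constructor
    rw [hμ, Measure.restrict_apply MeasurableSet.univ]
    simp
  set f : ℝ × ℝ → ℝ := fun p => if p.2 ≤ p.1 then g p.2 else 0 with hf
  have hset : MeasurableSet {p : ℝ × ℝ | p.2 ≤ p.1} :=
    measurableSet_le measurable_snd measurable_fst
  have huniv : μ Set.univ = 1 := by
    rw [hμ, Measure.restrict_apply MeasurableSet.univ, Set.univ_inter, Real.volume_Ioc]
    norm_num
  have hmap : Measure.map Prod.snd (μ.prod μ) = μ := by
    rw [Measure.map_snd_prod, huniv, one_smul]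
  have hgsnd : Integrable (fun p : ℝ × ℝ => g p.2) (μ.prod μ) := by
    have h1 : Integrable g (Measure.map Prod.snd (μ.prod μ)) := by rw [hmap]; exact hg'
    exact h1.comp_measurable measurable_snd
  have hfint : Integrable f (μ.prod μ) := by
    have : f = {p : ℝ × ℝ | p.2 ≤ p.1}.indicator (fun p => g p.2) := by
      ext p; by_cases h : p.2 ≤ p.1 <;> simp [hf, h, indicator_apply]
    rw [this]
    exact hgsnd.indicator hset
  have step1 : (∫ x in (0:ℝ)..1, ∫ y in (0:ℝ)..x, g y) = ∫ x, ∫ y, f (x, y) ∂μ ∂μ := by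
    rw [intervalIntegral.integral_of_le zero_le_one]
    apply setIntegral_congr_fun measurableSet_Ioc
    intro x hx
    show (∫ y in (0:ℝ)..x, g y) = ∫ y, f (x, y) ∂μ
    have hx1 : x ≤ 1 := hx.2
    rw [intervalIntegral.integral_of_le hx.1.le]
    have : ∀ y : ℝ, f (x, y) = (Iic x).indicator g y := by
      intro y; by_cases h : y ≤ x <;> simp [hf, h, indicator_apply]
    simp_rw [this]
    rw [MeasureTheory.integral_indicator measurableSet_Iic, hμ, Measure.restrict_restrict measurableSet_Iic]
    congr 1
    rw [Iic_inter_Ioc_of_le hx1]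
  have step2 : (∫ x, ∫ y, f (x, y) ∂μ ∂μ) = ∫ y, ∫ x, f (x, y) ∂μ ∂μ :=
    integral_integral_swap hfint
  have step3 : (∫ y, ∫ x, f (x, y) ∂μ ∂μ) = ∫ y in (0:ℝ)..1, (1 - y) * g y := by
    rw [intervalIntegral.integral_of_le zero_le_one]
    apply setIntegral_congr_fun measurableSet_Ioc
    intro y hy
    show (∫ x, f (x, y) ∂μ) = (1 - y) * g y
    have : ∀ x : ℝ, f (x, y) = (Ici y).indicator (fun _ => g y) x := by
      intro x; by_cases h : y ≤ x <;> simp [hf, h, indicator_apply]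
    simp_rw [this]
    rw [integral_indicator_const _ measurableSet_Ici, hμ,
      measureReal_restrict_apply measurableSet_Ici]
    have hcap : Ici y ∩ Ioc 0 1 = Icc y 1 := by
      ext z
      simp only [mem_inter_iff, mem_Ici, mem_Ioc, mem_Icc]
      exact ⟨fun h => ⟨h.1, h.2.2⟩, fun h => ⟨h.1, lt_of_lt_of_le hy.1 h.1, h.2⟩⟩
    rw [hcap, Real.volume_real_Icc_of_le (by linarith [hy.2])]
    rw [smul_eq_mul]
  rw [step1, step2, step3]

/-- Payoff of a positive constant strategy `u ≡ c` against `g`: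
`E[u,g] = 2c(1/2 − MCA(g))∫₀¹ g`; a constant strategy is not defeated by any
strategy with `MCA ≤ 1/2`. -/
theorem stmt13 (c : ℝ) (hc : 0 < c) (g : ℝ → ℝ)
    (hg : IntegrableOn g (Set.Icc (0:ℝ) 1))
    (hint : (∫ x in (0:ℝ)..1, g x) ≠ 0) :
    payoff (fun _ => c) g = 2 * c * (1/2 - mca g) * ∫ x in (0:ℝ)..1, g x ∧
    (mca g ≤ 1/2 → 0 < ∫ x in (0:ℝ)..1, g x → 0 ≤ payoff (fun _ => c) g) := by
  have hg' : IntegrableOn g (Set.Ioc (0:ℝ) 1) := hg.mono_set Set.Ioc_subset_Icc_self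
  have hgi : IntervalIntegrable g volume 0 1 :=
    (intervalIntegrable_iff_integrableOn_Ioc_of_le zero_le_one).mpr hg'
  set T : ℝ := ∫ x in (0:ℝ)..1, g x with hT
  set M : ℝ := ∫ x in (0:ℝ)..1, x * g x with hM
  have hGcont : ContinuousOn (fun x => ∫ y in (0:ℝ)..x, g y) (Set.uIcc (0:ℝ) 1) :=
    continuousOn_primitive_interval (by rwa [Set.uIcc_of_le zero_le_one])
  have hGii : IntervalIntegrable (fun x => ∫ y in (0:ℝ)..x, g y) volume 0 1 :=
    hGcont.intervalIntegrable
  have key : payoff (fun _ => c) g = c * (T - 2 * M) := by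
    have h1 : payoff (fun _ => c) g
        = ∫ x in (0:ℝ)..1, (2 * c * ∫ y in (0:ℝ)..x, g y) - c * T := by
      unfold payoff
      rw [intervalIntegral.integral_of_le zero_le_one,
        intervalIntegral.integral_of_le zero_le_one]
      apply setIntegral_congr_fun measurableSet_Ioc
      intro x hx
      have hx0 : (0:ℝ) ≤ x := hx.1.le
      have hx1 : x ≤ 1 := hx.2
      have hi1 : IntervalIntegrable g volume 0 x := hgi.mono_set (by
        rw [Set.uIcc_of_le hx0, Set.uIcc_of_le zero_le_one]
        exact Set.Icc_subset_Icc le_rfl hx1)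
      have hi2 : IntervalIntegrable g volume x 1 := hgi.mono_set (by
        rw [Set.uIcc_of_le hx1, Set.uIcc_of_le zero_le_one]
        exact Set.Icc_subset_Icc hx0 le_rfl)
      have hsplit : (∫ y in (0:ℝ)..x, g y) + (∫ y in x..1, g y) = T :=
        intervalIntegral.integral_add_adjacent_intervals hi1 hi2
      show c * ((∫ y in (0:ℝ)..x, g y) - ∫ y in x..1, g y)
          = (2 * c * ∫ y in (0:ℝ)..x, g y) - c * T
      have h2 : (∫ y in x..1, g y) = T - ∫ y in (0:ℝ)..x, g y := by linarith
      rw [h2]; ring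
    rw [h1, intervalIntegral.integral_sub ((hGii.const_mul _)) (intervalIntegrable_const),
      intervalIntegral.integral_const_mul, primitive_integral g hg,
      intervalIntegral.integral_const]
    have hsub : (∫ y in (0:ℝ)..1, (1 - y) * g y) = T - M := by
      have hyg : IntervalIntegrable (fun y => y * g y) volume 0 1 := by
        apply hgi.continuousOn_mul
        exact continuousOn_id
      have : (∫ y in (0:ℝ)..1, (1 - y) * g y)
          = (∫ y in (0:ℝ)..1, g y) - ∫ y in (0:ℝ)..1, y * g y := by
        rw [← intervalIntegral.integral_sub hgi hyg]
        congr 1; ext y; ring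
      rw [this]
    rw [hsub]
    simp
    ring
  have heq : payoff (fun _ => c) g = 2 * c * (1/2 - mca g) * T := by
    rw [key]
    have hmca : mca g = M / T := rfl
    rw [hmca]
    field_simp
  refine ⟨heq, fun hmle hTpos => ?_⟩
  rw [heq]
  have h2 : (0:ℝ) ≤ 1/2 - mca g := by linarith
  positivity
end

section
/- Let L be the (M+1)×(M+1) matrix with L_{ij} = −1 for i < j, L_{ij} = 1 for i > j, and 0 on the diagonal. Then rank(L) = M + 1 if M + 1 is even, and rank(L) = M if M + 1 is odd; in the odd case the kernel is spanned by the alternating vector (1, −1, 1, −1, ..., 1). -/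
open Finset


/-- The skew-symmetric matrix of the discrete selection gradient:
`−1` above the diagonal, `1` below, `0` on the diagonal. -/
def Lmat (M : ℕ) : Matrix (Fin (M+1)) (Fin (M+1)) ℝ :=
  Matrix.of fun i j => if i < j then -1 else if j < i then 1 else 0

lemma mulVec_formula (M : ℕ) (g : ℕ → ℝ) (i : Fin (M+1)) :
    (Lmat M).mulVec (fun j => g j.val) i
      = (∑ j ∈ range i.val, g j) + (∑ j ∈ range (i.val+1), g j)
          - ∑ j ∈ range (M+1), g j := by
  have hF : (Lmat M).mulVec (fun j => g j.val) i
      = ∑ j ∈ range (M+1),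
          (fun n => if n < i.val then g n else if i.val < n then -g n else 0) j := by
    rw [← Fin.sum_univ_eq_sum_range]
    simp only [Matrix.mulVec, dotProduct, Lmat, Matrix.of_apply, Fin.lt_def]
    refine Finset.sum_congr rfl fun j _ => ?_
    rcases lt_trichotomy (i.val) (j.val) with h | h | h
    · simp [h, not_lt.mpr h.le, Nat.lt_asymm h]
    · simp [h]
    · simp [h, not_lt.mpr h.le, Nat.lt_asymm h]
  rw [hF, ← Finset.sum_range_add_sum_Ico _ (Nat.succ_le_of_lt i.isLt)]
  rw [Finset.sum_range_succ]
  have h1 : ∀ j ∈ range i.val,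
      (if j < i.val then g j else if i.val < j then -g j else 0) = g j := by
    intro j hj; simp [mem_range.mp hj]
  have h2 : ∀ j ∈ Ico (i.val+1) (M+1),
      (if j < i.val then g j else if i.val < j then -g j else 0) = -g j := by
    intro j hj
    have hij : i.val < j := (mem_Ico.mp hj).1
    simp [hij, Nat.lt_asymm hij]
  rw [Finset.sum_congr rfl h1, Finset.sum_congr rfl h2, if_neg (lt_irrefl _), if_neg (lt_irrefl _)]
  rw [Finset.sum_neg_distrib, Finset.sum_Ico_eq_sub _ (Nat.succ_le_of_lt i.isLt)]
  ring

lemma mem_ker_iff (M : ℕ) (g : ℕ → ℝ) :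
    (fun j : Fin (M+1) => g j.val) ∈ LinearMap.ker (Lmat M).mulVecLin ↔
      ∀ i ≤ M, (∑ j ∈ range i, g j) + (∑ j ∈ range (i+1), g j)
          = ∑ j ∈ range (M+1), g j := by
  rw [LinearMap.mem_ker]
  rw [Matrix.mulVecLin_apply]
  rw [funext_iff]
  constructor
  · intro h i hi
    have := h ⟨i, Nat.lt_succ_of_le hi⟩
    rw [mulVec_formula] at this
    simpa [sub_eq_zero] using this
  · intro h i
    rw [mulVec_formula]
    have := h i.val (Nat.lt_succ_iff.mp i.isLt)
    simp [this]

lemma alt_of_ker (M : ℕ) (g : ℕ → ℝ)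
    (h : ∀ i ≤ M, (∑ j ∈ range i, g j) + (∑ j ∈ range (i+1), g j)
          = ∑ j ∈ range (M+1), g j) :
    ∀ k ≤ M, g k = (-1)^k * g 0 := by
  intro k
  induction k with
  | zero => intro _; simp
  | succ k ih =>
    intro hk
    have hkM : k ≤ M := Nat.le_of_succ_le hk
    have h1 := h k hkM
    have h2 := h (k+1) hk
    have key : g (k+1) = - g k := by
      have : (∑ j ∈ range k, g j) + (∑ j ∈ range (k+1), g j)
          = (∑ j ∈ range (k+1), g j) + (∑ j ∈ range (k+2), g j) := by
        rw [h1, h2]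
      rw [Finset.sum_range_succ (n := k+1), Finset.sum_range_succ (n := k)] at this
      linarith
    rw [key, ih hkM]
    ring

lemma ker_even (M : ℕ) (hM : Even M) :
    LinearMap.ker (Lmat M).mulVecLin
      = Submodule.span ℝ {fun i : Fin (M+1) => ((-1 : ℝ)) ^ (i : ℕ)} := by
  have hT : (∑ j ∈ range (M+1), ((-1:ℝ))^j) = 1 := by
    rw [neg_one_geom_sum, if_neg]
    simpa [Nat.even_add_one] using hM
  have altmem : (fun i : Fin (M+1) => ((-1 : ℝ)) ^ (i : ℕ))
      ∈ LinearMap.ker (Lmat M).mulVecLin := by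
    rw [show (fun i : Fin (M+1) => ((-1 : ℝ)) ^ (i : ℕ))
        = (fun j : Fin (M+1) => (fun n : ℕ => ((-1:ℝ))^n) j.val) from rfl]
    rw [mem_ker_iff]
    intro i _
    rw [hT, neg_one_geom_sum, neg_one_geom_sum]
    by_cases hi : Even i
    · rw [if_pos hi, if_neg (by simpa [Nat.even_add_one] using hi)]; ring
    · rw [if_neg hi, if_pos (by simpa [Nat.even_add_one] using hi)]; ring
  apply le_antisymm
  · intro x hx
    set g : ℕ → ℝ := fun n => if h : n < M+1 then x ⟨n, h⟩ else 0 with hg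
    have hxg : x = fun j : Fin (M+1) => g j.val := by
      funext j
      simp [hg, j.isLt, not_lt.mpr (Nat.lt_succ_iff.mp j.isLt)]
    rw [hxg, mem_ker_iff] at hx
    have halt := alt_of_ker M g hx
    rw [Submodule.mem_span_singleton]
    refine ⟨g 0, ?_⟩
    funext i
    have : g i.val = (-1)^(i:ℕ) * g 0 := halt i.val (Nat.lt_succ_iff.mp i.isLt)
    rw [hxg]
    simp only [Pi.smul_apply, smul_eq_mul]
    rw [this]; ring
  · rw [Submodule.span_le, Set.singleton_subset_iff]
    exact altmem

lemma ker_odd (M : ℕ) (hM : Odd M) :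
    LinearMap.ker (Lmat M).mulVecLin = ⊥ := by
  rw [eq_bot_iff]
  intro x hx
  set g : ℕ → ℝ := fun n => if h : n < M+1 then x ⟨n, h⟩ else 0 with hg
  have hxg : x = fun j : Fin (M+1) => g j.val := by
    funext j; simp [hg, j.isLt, not_lt.mpr (Nat.lt_succ_iff.mp j.isLt)]
  rw [hxg, mem_ker_iff] at hx
  have halt := alt_of_ker M g hx
  have hT : (∑ j ∈ range (M+1), g j) = 0 := by
    have : ∀ j ∈ range (M+1), g j = (-1)^j * g 0 := fun j hj =>
      halt j (Nat.lt_succ_iff.mp (mem_range.mp hj))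
    rw [Finset.sum_congr rfl this, ← Finset.sum_mul, neg_one_geom_sum,
      if_pos (Nat.even_add_one.mpr (Nat.not_even_iff_odd.mpr hM)), zero_mul]
  have h0 := hx 0 (Nat.zero_le M)
  simp [hT] at h0
  rw [Submodule.mem_bot, hxg]
  funext i
  have := halt i.val (Nat.lt_succ_iff.mp i.isLt)
  simp [this, h0]

theorem stmt15 (M : ℕ) :
    (Even (M + 1) → (Lmat M).rank = M + 1) ∧
    (Odd (M + 1) →
      (Lmat M).rank = M ∧
      LinearMap.ker (Lmat M).mulVecLin
        = Submodule.span ℝ {fun i : Fin (M+1) => ((-1 : ℝ)) ^ (i : ℕ)}) := by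
  have hrn := LinearMap.finrank_range_add_finrank_ker (Lmat M).mulVecLin
  rw [Module.finrank_fintype_fun_eq_card, Fintype.card_fin] at hrn
  constructor
  · intro hE
    have hMo : Odd M := by
      rcases Nat.even_or_odd M with h | h
      · exact absurd h (Nat.even_add_one.mp hE)
      · exact h
    have hker := ker_odd M hMo
    rw [hker, finrank_bot] at hrn
    rw [Matrix.rank]
    omega
  · intro hO
    have hMe : Even M := by
      rcases Nat.even_or_odd M with h | h
      · exact h
      · exact absurd hO (Nat.not_odd_iff_even.mpr
          (Nat.even_add_one.mpr (Nat.not_even_iff_odd.mpr h)))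
    have hker := ker_even M hMe
    refine ⟨?_, hker⟩
    have hne : (fun i : Fin (M+1) => ((-1 : ℝ)) ^ (i : ℕ)) ≠ 0 := by
      intro h
      have := congrFun h 0
      simp at this
    rw [hker, finrank_span_singleton hne] at hrn
    rw [Matrix.rank]
    omega
end

section
/- Let Q be a real projection matrix (Q² = Q, Q symmetric) and S a real skew-symmetric matrix of the same size n×n. Then every eigenvalue of QS is purely imaginary (i.e., lies in iℝ). -/
open Matrix
open Polynomial in
open scoped ComplexOrder in
/-- If `Q` is a real projection matrix and `S` a real skew-symmetric matrix,
then every complex eigenvalue of `QS` is purely imaginary. -/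
theorem stmt17 (n : ℕ) (Q S : Matrix (Fin n) (Fin n) ℝ)
    (hQproj : Q * Q = Q) (hQsymm : Qᵀ = Q) (hSskew : Sᵀ = -S)
    (μ : ℂ)
    (hμ : (Matrix.charpoly ((Q * S).map (fun x : ℝ => (x : ℂ)))).IsRoot μ) :
    μ.re = 0 := by
  rcases eq_or_ne μ 0 with h0 | h0
  · simp [h0]
  set f : ℝ →+* ℂ := Complex.ofRealHom with hf
  set A : Matrix (Fin n) (Fin n) ℂ := (Q * S).map f with hA
  -- extract an eigenvector
  have hdet : (μ • (1 : Matrix (Fin n) (Fin n) ℂ) - A).det = 0 := by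
    have h1 : Polynomial.eval μ A.charpoly
        = ((Polynomial.evalRingHom μ).mapMatrix (charmatrix A)).det :=
      RingHom.map_det (Polynomial.evalRingHom μ) _
    have heq : (Polynomial.evalRingHom μ).mapMatrix (charmatrix A)
        = μ • (1 : Matrix (Fin n) (Fin n) ℂ) - A := by
      ext i j
      by_cases h : i = j <;>
        simp [charmatrix_apply, h, Matrix.one_apply, Matrix.diagonal_apply]
    rw [heq] at h1
    rw [← h1]
    exact hμ
  obtain ⟨v, hv0, hv⟩ := (Matrix.exists_mulVec_eq_zero_iff).2 hdet
  rw [Matrix.sub_mulVec, Matrix.smul_mulVec, Matrix.one_mulVec, sub_eq_zero] at hv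
  replace hv : A *ᵥ v = μ • v := hv.symm
  -- complexified matrices
  set Qc : Matrix (Fin n) (Fin n) ℂ := Q.map f with hQc
  set Sc : Matrix (Fin n) (Fin n) ℂ := S.map f with hSc
  have hAQS : A = Qc * Sc := by rw [hA, hQc, hSc, Matrix.map_mul]
  have hQc2 : Qc * Qc = Qc := by rw [hQc, ← Matrix.map_mul, hQproj]
  -- v is fixed by Qc
  have hQv : Qc *ᵥ v = v := by
    have h1 : Qc *ᵥ (A *ᵥ v) = A *ᵥ v := by
      rw [Matrix.mulVec_mulVec, hAQS, ← Matrix.mul_assoc, hQc2]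
    rw [hv, Matrix.mulVec_smul] at h1
    have := smul_right_injective (Fin n → ℂ) h0 h1
    exact this
  -- B := Qc * Sc * Qc is skew-symmetric with eigenvector v
  set B : Matrix (Fin n) (Fin n) ℂ := Qc * Sc * Qc with hB
  have hBreal : B = (Q * S * Q).map f := by
    rw [hB, hQc, hSc, Matrix.map_mul, Matrix.map_mul]
  have hBv : B *ᵥ v = μ • v := by
    rw [hB, ← Matrix.mulVec_mulVec, hQv, ← hAQS, hv]
  have hBskew : Bᵀ = -B := by
    rw [hB, Matrix.transpose_mul, Matrix.transpose_mul]
    have hQcT : Qcᵀ = Qc := by rw [hQc, ← Matrix.transpose_map, hQsymm]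
    have hScT : Scᵀ = -Sc := by
      rw [hSc, ← Matrix.transpose_map, hSskew]
      ext i j; simp
    rw [hQcT, hScT]
    noncomm_ring
  have hBH : Bᴴ = -B := by
    have h1 : Bᴴ = Bᵀ := by
      ext i j
      rw [Matrix.conjTranspose_apply, Matrix.transpose_apply, hBreal]
      simp [Matrix.map_apply, hf, Complex.conj_ofReal]
    rw [h1, hBskew]
  -- the conjugation argument
  set c : ℂ := star v ⬝ᵥ v with hc
  have hc0 : c ≠ 0 := fun h => hv0 (dotProduct_star_self_eq_zero.mp h)
  have hcstar : star c = c := by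
    simp [hc, dotProduct, mul_comm]
  have e1 : star v ⬝ᵥ (B *ᵥ v) = μ * c := by
    rw [hBv]; simp [hc, dotProduct_smul, smul_eq_mul]
  have e2 : star (star v ⬝ᵥ (B *ᵥ v)) = -(μ * c) :=
    calc star (star v ⬝ᵥ (B *ᵥ v)) = star (B *ᵥ v) ⬝ᵥ v := by
          rw [Matrix.star_dotProduct, star_star]
      _ = (star v ᵥ* Bᴴ) ⬝ᵥ v := by rw [Matrix.star_mulVec]
      _ = star v ⬝ᵥ (Bᴴ *ᵥ v) := (Matrix.dotProduct_mulVec _ _ _).symm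
      _ = -(μ * c) := by rw [hBH, Matrix.neg_mulVec, dotProduct_neg, e1]
  have key : star μ * c = -(μ * c) := by
    rw [e1, star_mul', hcstar] at e2
    exact e2
  have hsum : star μ + μ = 0 := by
    have : (star μ + μ) * c = 0 := by rw [add_mul, key]; ring
    rcases mul_eq_zero.mp this with h | h
    · exact h
    · exact absurd h hc0
  have := congrArg Complex.re hsum
  simp [Complex.add_re, Complex.conj_re] at this
  linarith
end
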